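/- arXiv:1803.00123 — 9 statements merged into one kernel-verified Lean document; each statement's English description precedes it below -/
import Mathlib

section
/- Let A be an N×N unitary matrix (N ≥ 2) whose first row has all entries equal to 1/√N. Define m_i(x) = √N · Σ_{j=0}^{N-1} a_{ij} · χ_{[j/N,(j+1)/N)}(x) on [0,1], and operators S_i on L²[0,1] by (S_i f)(x) = m_i(x) f(Nx mod 1). Then S_i* S_j = δ_{ij} I for all i, j ∈ {0,...,N-1}. -/
open MeasureTheory

/-- The filter functions `m_i(x) = √N ∑_j a_{ij} χ_{[j/N,(j+1)/N)}(x)`. -/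
noncomputable def walshFilter {N : ℕ} (A : Matrix (Fin N) (Fin N) ℂ) (i : Fin N) (x : ℝ) : ℂ :=
  Real.sqrt N *
    ∑ j : Fin N, A i j *
      Set.indicator (Set.Ico ((j : ℝ) / N) (((j : ℝ) + 1) / N)) (fun _ => (1 : ℂ)) x

/-- The operator `(S_i f)(x) = m_i(x) f(Nx mod 1)` at the level of functions. -/
noncomputable def walshOp {N : ℕ} (A : Matrix (Fin N) (Fin N) ℂ) (i : Fin N)
    (f : ℝ → ℂ) (x : ℝ) : ℂ :=
  walshFilter A i x * f (Int.fract (N * x))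

lemma walshFilter_eq {N : ℕ} (hN : 0 < N) (A : Matrix (Fin N) (Fin N) ℂ) (i : Fin N)
    {k : Fin N} {x : ℝ} (hx : x ∈ Set.Ico ((k : ℝ) / N) (((k : ℝ) + 1) / N)) :
    walshFilter A i x = Real.sqrt N * A i k := by
  have hN' : (0:ℝ) < N := by exact_mod_cast hN
  unfold walshFilter
  congr 1
  rw [Finset.sum_eq_single k]
  · simp [Set.indicator_of_mem hx]
  · intro b _ hb
    rw [Set.indicator_of_notMem, mul_zero]
    intro hxb
    apply hb
    have h1 : (b : ℝ) / N < ((k : ℝ) + 1) / N := lt_of_le_of_lt hxb.1 hx.2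
    have h2 : (k : ℝ) / N < ((b : ℝ) + 1) / N := lt_of_le_of_lt hx.1 hxb.2
    rw [div_lt_div_iff_of_pos_right hN'] at h1 h2
    have h1' : (b : ℕ) < k + 1 := by exact_mod_cast h1
    have h2' : (k : ℕ) < b + 1 := by exact_mod_cast h2
    exact Fin.ext (by omega)
  · intro h; exact absurd (Finset.mem_univ k) h

lemma fract_eq {N : ℕ} (hN : 0 < N) {k : Fin N} {x : ℝ}
    (hx : x ∈ Set.Ico ((k : ℝ) / N) (((k : ℝ) + 1) / N)) :
    Int.fract ((N : ℝ) * x) = (N : ℝ) * x - k := by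
  have hN' : (0:ℝ) < N := by exact_mod_cast hN
  have h1 : (k : ℝ) ≤ (N : ℝ) * x := by
    have := hx.1; rw [div_le_iff₀ hN'] at this; linarith [mul_comm x (N:ℝ)]
  have h2 : (N : ℝ) * x < (k : ℝ) + 1 := by
    have := hx.2; rw [lt_div_iff₀ hN'] at this; linarith [mul_comm x (N:ℝ)]
  have hfl : ⌊(N : ℝ) * x⌋ = (k : ℤ) := by
    rw [Int.floor_eq_iff]
    constructor <;> [exact_mod_cast h1; exact_mod_cast h2]
  rw [Int.fract, hfl]
  norm_num

lemma pointwise_eq {N : ℕ} (hN : 0 < N) (A : Matrix (Fin N) (Fin N) ℂ) (i j : Fin N)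
    (f g : ℝ → ℂ) {k : Fin N} {x : ℝ}
    (hx : x ∈ Set.Ico ((k : ℝ) / N) (((k : ℝ) + 1) / N)) :
    (starRingEnd ℂ) (walshOp A i f x) * walshOp A j g x =
      (N : ℂ) * ((starRingEnd ℂ) (A i k) * A j k) *
        ((starRingEnd ℂ) (f ((N : ℝ) * x - k)) * g ((N : ℝ) * x - k)) := by
  unfold walshOp
  rw [walshFilter_eq hN A i hx, walshFilter_eq hN A j hx, fract_eq hN hx]
  have hs : ((Real.sqrt N : ℂ)) * (Real.sqrt N : ℂ) = (N : ℂ) := by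
    rw [← Complex.ofReal_mul, Real.mul_self_sqrt (Nat.cast_nonneg N)]
    norm_cast
  simp only [map_mul, Complex.conj_ofReal]
  ring_nf
  rw [← hs]
  ring

lemma intervalIntegrable_congr_ae' {f g : ℝ → ℂ} {a b : ℝ} (hab : a ≤ b)
    (hf : IntervalIntegrable f volume a b)
    (heq : ∀ᵐ x : ℝ, x ∈ Set.uIoc a b → f x = g x) :
    IntervalIntegrable g volume a b := by
  constructor
  · apply hf.1.congr
    rw [Set.uIoc_of_le hab] at heq
    exact (ae_restrict_iff' measurableSet_Ioc).2 heq
  · rw [Set.Ioc_eq_empty (not_lt.2 hab)]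
    exact integrableOn_empty


/-- The operators `S_i` on `L²[0,1]` satisfy `S_i* S_j = δ_{ij} I`,
expressed weakly: `⟨S_i f, S_j g⟩ = δ_{ij} ⟨f, g⟩` for all `f, g ∈ L²[0,1]`. -/
theorem stmt_0 {N : ℕ} (hN : 2 ≤ N) (A : Matrix (Fin N) (Fin N) ℂ)
    (hA : A ∈ Matrix.unitaryGroup (Fin N) ℂ)
    (hrow : ∀ j, A ⟨0, by omega⟩ j = ((Real.sqrt N)⁻¹ : ℝ))
    (i j : Fin N) (f g : ℝ → ℂ)
    (hf : MemLp f 2 (volume.restrict (Set.Icc (0 : ℝ) 1)))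
    (hg : MemLp g 2 (volume.restrict (Set.Icc (0 : ℝ) 1))) :
    ∫ x in Set.Icc (0 : ℝ) 1,
        (starRingEnd ℂ) (walshOp A i f x) * walshOp A j g x =
      (if i = j then 1 else 0) *
        ∫ x in Set.Icc (0 : ℝ) 1, (starRingEnd ℂ) (f x) * g x := by
  have hN0 : 0 < N := by omega
  have hN' : (0:ℝ) < N := by exact_mod_cast hN0
  set h : ℝ → ℂ := fun x => (starRingEnd ℂ) (f x) * g x with hh_def
  -- integrability of h on [0,1]
  have hh : IntegrableOn h (Set.Icc (0:ℝ) 1) volume := by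
    have hint := L2.integrable_inner (𝕜 := ℂ) (hf.toLp f) (hg.toLp g)
    refine hint.congr ?_
    filter_upwards [hf.coeFn_toLp, hg.coeFn_toLp] with x h1 h2
    simp [RCLike.inner_apply, h1, h2, hh_def, mul_comm]
  have hInt : IntervalIntegrable h volume 0 1 := by
    rw [intervalIntegrable_iff_integrableOn_Ioc_of_le zero_le_one]
    exact hh.mono_set Set.Ioc_subset_Icc_self
  set F : ℝ → ℂ := fun x => (starRingEnd ℂ) (walshOp A i f x) * walshOp A j g x with hF_def
  -- per-interval a.e. equality
  have haeq : ∀ k : Fin N, ∀ᵐ x : ℝ, x ∈ Set.uIoc ((k:ℝ)/N) (((k:ℝ)+1)/N) →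
      F x = (N : ℂ) * ((starRingEnd ℂ) (A i k) * A j k) * h ((N : ℝ) * x - k) := by
    intro k
    have hle : ((k:ℝ))/N ≤ ((k:ℝ)+1)/N := by
      gcongr
      linarith
    have hb : ∀ᵐ x : ℝ, x ≠ ((k:ℝ)+1)/N := by
      rw [MeasureTheory.ae_iff]
      simp only [not_ne_iff]
      have : {x : ℝ | x = ((k:ℝ)+1)/N} = {((k:ℝ)+1)/N} := rfl
      rw [this, Real.volume_singleton]
    filter_upwards [hb] with x hxne hxmem
    rw [Set.uIoc_of_le hle] at hxmem
    have hx : x ∈ Set.Ico ((k:ℝ)/N) (((k:ℝ)+1)/N) :=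
      ⟨hxmem.1.le, lt_of_le_of_ne hxmem.2 hxne⟩
    exact pointwise_eq hN0 A i j f g hx
  have hNC : (N:ℂ) ≠ 0 := Nat.cast_ne_zero.2 hN0.ne'
  have hle : ∀ k : Fin N, ((k:ℝ))/N ≤ ((k:ℝ)+1)/N := by
    intro k; gcongr; linarith
  -- per-interval integral value
  have key : ∀ k : Fin N, ∫ x in ((k:ℝ)/N)..(((k:ℝ)+1)/N), F x =
      (starRingEnd ℂ) (A i k) * A j k * ∫ x in (0:ℝ)..1, h x := by
    intro k
    rw [intervalIntegral.integral_congr_ae (haeq k)]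
    have e1 : (N:ℝ) * ((k:ℝ)/N) - k = 0 := by field_simp; ring
    have e2 : (N:ℝ) * (((k:ℝ)+1)/N) - k = 1 := by field_simp; ring
    rw [intervalIntegral.integral_const_mul,
      intervalIntegral.integral_comp_mul_sub h hN'.ne' (k:ℝ), e1, e2,
      Complex.real_smul, Complex.ofReal_inv, Complex.ofReal_natCast]
    field_simp
  -- interval integrability of F on each piece
  have hII : ∀ k : Fin N, IntervalIntegrable F volume ((k:ℝ)/N) (((k:ℝ)+1)/N) := by
    intro k
    have h1 : IntervalIntegrable (fun y => h (y - (k:ℝ))) volume (0 + (k:ℝ)) (1 + (k:ℝ)) :=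
      hInt.comp_sub_right (k:ℝ)
    have h2 := h1.comp_mul_left (c := (N:ℝ)) enorm_ne_top enorm_ne_top
    have e1 : ((0:ℝ) + (k:ℝ))/N = (k:ℝ)/N := by ring
    have e2 : ((1:ℝ) + (k:ℝ))/N = ((k:ℝ)+1)/N := by ring
    rw [e1, e2] at h2
    have h3 := h2.const_mul ((N : ℂ) * ((starRingEnd ℂ) (A i k) * A j k))
    refine intervalIntegrable_congr_ae' (hle k) h3 ?_
    filter_upwards [haeq k] with x hx hxmem
    exact (hx hxmem).symm
  -- sum over adjacent intervals
  have hsum := intervalIntegral.sum_integral_adjacent_intervals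
    (a := fun m : ℕ => (m:ℝ)/N) (n := N) (f := F) (μ := volume) ?_
  swap
  · intro m hm
    have := hII ⟨m, hm⟩
    simpa [Nat.cast_add, Nat.cast_one, add_comm] using this
  have ha0 : ((0:ℕ):ℝ)/N = 0 := by simp
  have haN : ((N:ℕ):ℝ)/N = 1 := by field_simp
  rw [ha0, haN] at hsum
  -- unitarity
  have hU : ∑ k : Fin N, (starRingEnd ℂ) (A i k) * A j k = if i = j then 1 else 0 := by
    rw [Matrix.mem_unitaryGroup_iff] at hA
    have hAji := congrFun (congrFun hA j) i
    rw [Matrix.mul_apply, Matrix.one_apply] at hAji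
    simp only [Matrix.star_apply, RCLike.star_def] at hAji
    calc ∑ k : Fin N, (starRingEnd ℂ) (A i k) * A j k
        = ∑ k : Fin N, A j k * (starRingEnd ℂ) (A i k) := by
          exact Finset.sum_congr rfl fun k _ => mul_comm _ _
      _ = if j = i then 1 else 0 := hAji
      _ = if i = j then 1 else 0 := by simp [eq_comm]
  -- put everything together
  have hFin := Fin.sum_univ_eq_sum_range
    (fun m : ℕ => ∫ x in ((m:ℝ)/N)..(((m:ℝ)+1)/N), F x) N
  calc ∫ x in Set.Icc (0:ℝ) 1, F x
      = ∫ x in Set.Ioc (0:ℝ) 1, F x := integral_Icc_eq_integral_Ioc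
    _ = ∫ x in (0:ℝ)..1, F x := (intervalIntegral.integral_of_le zero_le_one).symm
    _ = ∑ m ∈ Finset.range N, ∫ x in ((m:ℝ)/N)..((((m+1):ℕ):ℝ)/N), F x := hsum.symm
    _ = ∑ m ∈ Finset.range N, ∫ x in ((m:ℝ)/N)..(((m:ℝ)+1)/N), F x := by
        refine Finset.sum_congr rfl fun m _ => ?_
        norm_num
    _ = ∑ k : Fin N, ∫ x in (((k:ℕ):ℝ)/N)..((((k:ℕ):ℝ)+1)/N), F x := hFin.symm
    _ = ∑ k : Fin N, (starRingEnd ℂ) (A i k) * A j k * ∫ x in (0:ℝ)..1, h x := by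
        exact Finset.sum_congr rfl fun k _ => key k
    _ = (∑ k : Fin N, (starRingEnd ℂ) (A i k) * A j k) * ∫ x in (0:ℝ)..1, h x :=
        (Finset.sum_mul _ _ _).symm
    _ = (if i = j then 1 else 0) * ∫ x in (0:ℝ)..1, h x := by rw [hU]
    _ = (if i = j then 1 else 0) * ∫ x in Set.Icc (0:ℝ) 1, h x := by
        rw [intervalIntegral.integral_of_le zero_le_one, ← integral_Icc_eq_integral_Ioc]
end

section
/- Let (S_i)_{i=0}^{N-1} be a representation of the Cuntz algebra O_N on a separable Hilbert space H and v_0 ∈ H with ‖v_0‖ = 1 and S_0 v_0 = v_0. If the family {S_ω v_0 : ω a finite word over {0,...,N-1} not ending in 0, together with v_0 itself} is an orthonormal basis of H, then the representation is irreducible (i.e., the only closed subspaces invariant under all S_i and S_i* are {0} and H). Conversely, if the representation is irreducible, the family is an orthonormal basis. -/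
open ContinuousLinearMap

/-- `S_ω = S_{ω₁} ∘ ⋯ ∘ S_{ω_n}` for a finite word `ω`. -/
def Sword {H : Type*} [NormedAddCommGroup H] [InnerProductSpace ℂ H] {N : ℕ}
    (S : Fin N → H →L[ℂ] H) : List (Fin N) → H →L[ℂ] H
  | [] => 1
  | i :: ω => S i ∘L Sword S ω

/-- The index set `Ω`: finite words over `{0,…,N-1}` that do not end in `0`
(including the empty word). -/
def Words (N : ℕ) [NeZero N] : Type := {l : List (Fin N) // l.getLast? ≠ some 0}

local notation "⟪" x ", " y "⟫" => @inner ℂ _ _ x y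

section Aux

variable {H : Type*} [NormedAddCommGroup H] [InnerProductSpace ℂ H]
    [CompleteSpace H] {N : ℕ} [NeZero N] {S : Fin N → H →L[ℂ] H} {v₀ : H}

lemma Sword_nil : Sword S ([] : List (Fin N)) = 1 := rfl

lemma Sword_cons (i : Fin N) (l : List (Fin N)) : Sword S (i :: l) = S i ∘L Sword S l := rfl

lemma tail_valid {i : Fin N} {l : List (Fin N)} (h : (i :: l).getLast? ≠ some 0) :
    l.getLast? ≠ some 0 := by
  cases l with
  | nil => simp
  | cons j m => rwa [List.getLast?_cons_cons] at h

variable (hc1 : ∀ i j, adjoint (S i) ∘L S j = if i = j then 1 else 0)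

include hc1

lemma SadjS (i j : Fin N) (x : H) :
    adjoint (S i) (S j x) = if i = j then x else 0 := by
  have h := congrArg (fun A : H →L[ℂ] H => A x) (hc1 i j)
  simpa [apply_ite (fun A : H →L[ℂ] H => A x)] using h

lemma key1 (h0 : S 0 v₀ = v₀) :
    ∀ l : List (Fin N), l.getLast? ≠ some 0 → l ≠ [] → ⟪v₀, Sword S l v₀⟫ = 0 := by
  intro l
  induction l with
  | nil => intro _ h; exact absurd rfl h
  | cons i l ih =>
    intro hW _
    calc ⟪v₀, Sword S (i :: l) v₀⟫
        = ⟪S 0 v₀, S i (Sword S l v₀)⟫ := by rw [h0, Sword_cons, ContinuousLinearMap.comp_apply]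
      _ = ⟪v₀, adjoint (S 0) (S i (Sword S l v₀))⟫ := (adjoint_inner_right _ _ _).symm
      _ = ⟪v₀, if (0 : Fin N) = i then Sword S l v₀ else 0⟫ := by rw [SadjS hc1]
      _ = 0 := by
          by_cases hi : (0 : Fin N) = i
          · rw [if_pos hi]
            subst hi
            have hl : l ≠ [] := by rintro rfl; simp at hW
            exact ih (tail_valid hW) hl
          · rw [if_neg hi, inner_zero_right]

lemma key2 (hv₀ : ‖v₀‖ = 1) (h0 : S 0 v₀ = v₀) :
    ∀ l m : List (Fin N), l.getLast? ≠ some 0 → m.getLast? ≠ some 0 →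
      ⟪Sword S l v₀, Sword S m v₀⟫ = if l = m then 1 else 0 := by
  intro l
  induction l with
  | nil =>
    intro m _ hm
    cases m with
    | nil => simp [Sword_nil, inner_self_eq_norm_sq_to_K, hv₀]
    | cons j m' =>
      rw [Sword_nil, ContinuousLinearMap.one_apply, key1 hc1 h0 _ hm (by simp),
        if_neg (by simp)]
  | cons i l ih =>
    intro m hl hm
    cases m with
    | nil =>
      rw [Sword_nil, ContinuousLinearMap.one_apply, ← inner_conj_symm,
        key1 hc1 h0 _ hl (by simp), if_neg (by simp)]
      simp
    | cons j m' =>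
      rw [Sword_cons, Sword_cons, ContinuousLinearMap.comp_apply,
        ContinuousLinearMap.comp_apply, ← adjoint_inner_right, SadjS hc1]
      by_cases hij : i = j
      · subst hij
        rw [if_pos rfl, ih m' (tail_valid hl) (tail_valid hm)]
        by_cases h : l = m'
        · rw [if_pos h, if_pos (by rw [h])]
        · rw [if_neg h, if_neg (by simp [h])]
      · rw [if_neg hij, inner_zero_right, if_neg (by simp [hij])]

lemma key3 (h0 : S 0 v₀ = v₀) :
    ∀ l : List (Fin N), l.getLast? ≠ some 0 → l ≠ [] →
      (adjoint (S 0) ^ l.length) (Sword S l v₀) = 0 := by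
  intro l
  induction l with
  | nil => intro _ h; exact absurd rfl h
  | cons i l ih =>
    intro hW _
    rw [List.length_cons, pow_succ, ContinuousLinearMap.mul_apply, Sword_cons,
      ContinuousLinearMap.comp_apply, SadjS hc1]
    by_cases hi : (0 : Fin N) = i
    · rw [if_pos hi]
      subst hi
      have hl : l ≠ [] := by rintro rfl; simp at hW
      exact ih (tail_valid hW) hl
    · rw [if_neg hi, map_zero]

lemma Tle : ∀ y : H, ‖adjoint (S 0) y‖ ≤ ‖y‖ := by
  intro y
  have hiso : ∀ (i : Fin N) (x : H), ⟪S i x, S i x⟫ = ⟪x, x⟫ := by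
    intro i x
    rw [← adjoint_inner_right, SadjS hc1, if_pos rfl]
  set T : H →L[ℂ] H := adjoint (S 0) with hT
  have h1 : ‖T y‖ ^ 2 = RCLike.re ⟪T y, T y⟫ := (inner_self_eq_norm_sq (𝕜 := ℂ) _).symm
  have h2 : ⟪T y, T y⟫ = ⟪y, S 0 (T y)⟫ := by rw [hT, adjoint_inner_left]
  have h3 : ‖S 0 (T y)‖ = ‖T y‖ := by
    have h := congrArg RCLike.re (hiso 0 (T y))
    rw [inner_self_eq_norm_sq (𝕜 := ℂ), inner_self_eq_norm_sq (𝕜 := ℂ)] at h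
    nlinarith [norm_nonneg (S 0 (T y)), norm_nonneg (T y)]
  have h4 : RCLike.re ⟪y, S 0 (T y)⟫ ≤ ‖y‖ * ‖T y‖ := by
    calc RCLike.re ⟪y, S 0 (T y)⟫ ≤ ‖⟪y, S 0 (T y)⟫‖ := RCLike.re_le_norm _
      _ ≤ ‖y‖ * ‖S 0 (T y)‖ := norm_inner_le_norm _ _
      _ = ‖y‖ * ‖T y‖ := by rw [h3]
  have h5 : ‖T y‖ ^ 2 ≤ ‖y‖ * ‖T y‖ := by rw [h1, h2]; exact h4
  nlinarith [norm_nonneg (T y), norm_nonneg y]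

lemma Tnle : ∀ (n : ℕ) (y : H), ‖(adjoint (S 0) ^ n) y‖ ≤ ‖y‖ := by
  intro n
  induction n with
  | zero => intro y; rw [pow_zero, ContinuousLinearMap.one_apply]
  | succ n ih =>
    intro y
    rw [pow_succ, ContinuousLinearMap.mul_apply]
    exact (ih _).trans (Tle hc1 y)

lemma key4 (hv₀ : ‖v₀‖ = 1) (h0 : S 0 v₀ = v₀) {y : H}
    (hy : y ∈ Submodule.span ℂ (Set.range fun ω : Words N => Sword S ω.val v₀)) :
    ∃ n : ℕ, ∀ m ≥ n, (adjoint (S 0) ^ m) y = ⟪v₀, y⟫ • v₀ := by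
  have hTv : adjoint (S 0) v₀ = v₀ := by
    conv_lhs => rw [← h0]
    rw [SadjS hc1, if_pos rfl]
  have hTvn : ∀ m : ℕ, (adjoint (S 0) ^ m) v₀ = v₀ := by
    intro m
    induction m with
    | zero => rw [pow_zero, ContinuousLinearMap.one_apply]
    | succ m ih => rw [pow_succ, ContinuousLinearMap.mul_apply, hTv, ih]
  induction hy using Submodule.span_induction with
  | mem u hu =>
    obtain ⟨ω, rfl⟩ := hu
    rcases eq_or_ne ω.val [] with he | he
    · refine ⟨0, fun m _ => ?_⟩
      simp only [he, Sword_nil, ContinuousLinearMap.one_apply, hTvn m,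
        inner_self_eq_norm_sq_to_K, hv₀]
      norm_num
    · refine ⟨ω.val.length, fun m hm => ?_⟩
      have h1 : (adjoint (S 0) ^ ω.val.length) (Sword S ω.val v₀) = 0 :=
        key3 hc1 h0 _ ω.2 he
      have h2 : (adjoint (S 0) ^ m) (Sword S ω.val v₀) = 0 := by
        obtain ⟨k, rfl⟩ := Nat.exists_eq_add_of_le hm
        rw [add_comm, pow_add, ContinuousLinearMap.mul_apply, h1, map_zero]
      rw [h2, key1 hc1 h0 _ ω.2 he, zero_smul]
  | zero => exact ⟨0, fun m _ => by simp⟩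
  | add a b ha hb iha ihb =>
    obtain ⟨n₁, h₁⟩ := iha
    obtain ⟨n₂, h₂⟩ := ihb
    refine ⟨max n₁ n₂, fun m hm => ?_⟩
    rw [map_add, h₁ m (le_trans (le_max_left _ _) hm), h₂ m (le_trans (le_max_right _ _) hm),
      inner_add_right, add_smul]
  | smul c a ha iha =>
    obtain ⟨n, hn⟩ := iha
    refine ⟨n, fun m hm => ?_⟩
    rw [map_smul, hn m hm, inner_smul_right, smul_smul]

end Aux

/-- For a representation of the Cuntz algebra `O_N` on a separable Hilbert
space `H` and a unit vector `v₀` with `S_0 v₀ = v₀`: the family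
`{S_ω v₀ : ω not ending in 0}` is an orthonormal basis of `H` if and only if the
representation is irreducible (the only closed subspaces invariant under all `S_i` and
`S_i*` are `{0}` and `H`). -/
theorem stmt_4 {H : Type*} [NormedAddCommGroup H] [InnerProductSpace ℂ H]
    [CompleteSpace H] [TopologicalSpace.SeparableSpace H]
    {N : ℕ} [NeZero N] (S : Fin N → H →L[ℂ] H)
    (hcuntz1 : ∀ i j, adjoint (S i) ∘L S j = if i = j then 1 else 0)
    (hcuntz2 : ∑ i : Fin N, S i ∘L adjoint (S i) = 1)
    (v₀ : H) (hv₀ : ‖v₀‖ = 1) (h0 : S 0 v₀ = v₀) :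
    (Orthonormal ℂ (fun ω : Words N => Sword S ω.val v₀) ∧
      (Submodule.span ℂ (Set.range fun ω : Words N => Sword S ω.val v₀)).topologicalClosure
        = ⊤) ↔
    (∀ K : Submodule ℂ H, IsClosed (K : Set H) →
      (∀ i, ∀ x ∈ K, S i x ∈ K) → (∀ i, ∀ x ∈ K, adjoint (S i) x ∈ K) →
      K = ⊥ ∨ K = ⊤) := by
  classical
  have horth : Orthonormal ℂ (fun ω : Words N => Sword S ω.val v₀) := by
    rw [orthonormal_iff_ite]
    intro ω η
    rw [key2 hcuntz1 hv₀ h0 ω.val η.val ω.2 η.2]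
    by_cases h : ω = η
    · rw [if_pos (by rw [h]), if_pos h]
    · rw [if_neg (fun hh => h (Subtype.ext hh)), if_neg h]
  constructor
  · rintro ⟨-, hdense⟩ K hKc hKS hKSadj
    by_cases hv : ∀ x ∈ K, ⟪v₀, x⟫ = 0
    · left
      rw [Submodule.eq_bot_iff]
      intro x hx
      have gen0 : ∀ (l : List (Fin N)) (y : H), y ∈ K → ⟪Sword S l v₀, y⟫ = 0 := by
        intro l
        induction l with
        | nil => intro y hy; rw [Sword_nil, ContinuousLinearMap.one_apply]; exact hv y hy
        | cons i l ih =>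
          intro y hy
          rw [Sword_cons, ContinuousLinearMap.comp_apply, ← adjoint_inner_right]
          exact ih _ (hKSadj i y hy)
      have hxo : x ∈ (Submodule.span ℂ
          (Set.range fun ω : Words N => Sword S ω.val v₀))ᗮ := by
        rw [Submodule.mem_orthogonal]
        intro u hu
        induction hu using Submodule.span_induction with
        | mem u hu => obtain ⟨ω, rfl⟩ := hu; exact gen0 _ _ hx
        | zero => exact inner_zero_left _
        | add a b ha hb iha ihb => rw [inner_add_left, iha, ihb, add_zero]
        | smul c a ha iha => rw [inner_smul_left, iha, mul_zero]
      rw [Submodule.topologicalClosure_eq_top_iff.mp hdense] at hxo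
      exact (Submodule.mem_bot ℂ).mp hxo
    · right
      push_neg at hv
      obtain ⟨x, hxK, hxc⟩ := hv
      have hTpow : ∀ (n : ℕ) (z : H), z ∈ K → (adjoint (S 0) ^ n) z ∈ K := by
        intro n
        induction n with
        | zero => intro z hz; rwa [pow_zero, ContinuousLinearMap.one_apply]
        | succ n ih =>
          intro z hz
          rw [pow_succ, ContinuousLinearMap.mul_apply]
          exact ih _ (hKSadj 0 z hz)
      have hv₀K : v₀ ∈ K := by
        have hsmul : ⟪v₀, x⟫ • v₀ ∈ K := by
          have hclos : (⟪v₀, x⟫ • v₀) ∈ closure (K : Set H) := by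
            rw [Metric.mem_closure_iff]
            intro ε hε
            have hdx : x ∈ closure ((Submodule.span ℂ
                (Set.range fun ω : Words N => Sword S ω.val v₀) : Submodule ℂ H) : Set H) := by
              rw [← Submodule.topologicalClosure_coe, hdense]
              simp
            rw [Metric.mem_closure_iff] at hdx
            obtain ⟨y, hy, hyx⟩ := hdx (ε / 2) (by linarith)
            obtain ⟨n, hn⟩ := key4 hcuntz1 hv₀ h0 hy
            refine ⟨(adjoint (S 0) ^ n) x, hTpow n x hxK, ?_⟩
            have hTn := hn n le_rfl
            have heq : ⟪v₀, x⟫ • v₀ - (adjoint (S 0) ^ n) x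
                = (⟪v₀, x - y⟫ • v₀) + ((adjoint (S 0) ^ n) (y - x)) := by
              rw [map_sub, inner_sub_right, sub_smul, hTn]
              abel
            rw [dist_eq_norm, heq]
            have b1 : ‖⟪v₀, x - y⟫ • v₀‖ ≤ ‖x - y‖ := by
              rw [norm_smul]
              calc ‖⟪v₀, x - y⟫‖ * ‖v₀‖ ≤ (‖v₀‖ * ‖x - y‖) * ‖v₀‖ :=
                    mul_le_mul_of_nonneg_right (norm_inner_le_norm _ _) (norm_nonneg _)
                _ = ‖x - y‖ := by rw [hv₀]; ring
            have b2 : ‖(adjoint (S 0) ^ n) (y - x)‖ ≤ ‖y - x‖ := Tnle hcuntz1 n _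
            have h' : ‖x - y‖ < ε / 2 := by rw [← dist_eq_norm]; exact hyx
            have h'' : ‖y - x‖ < ε / 2 := by rw [norm_sub_rev, ← dist_eq_norm]; exact hyx
            calc ‖⟪v₀, x - y⟫ • v₀ + (adjoint (S 0) ^ n) (y - x)‖
                ≤ ‖⟪v₀, x - y⟫ • v₀‖ + ‖(adjoint (S 0) ^ n) (y - x)‖ := norm_add_le _ _
              _ ≤ ‖x - y‖ + ‖y - x‖ := add_le_add b1 b2
              _ < ε := by linarith
          rwa [hKc.closure_eq] at hclos
        have h6 := K.smul_mem (⟪v₀, x⟫)⁻¹ hsmul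
        rwa [inv_smul_smul₀ hxc] at h6
      have hword : ∀ l : List (Fin N), Sword S l v₀ ∈ K := by
        intro l
        induction l with
        | nil => rwa [Sword_nil, ContinuousLinearMap.one_apply]
        | cons i l ih =>
          rw [Sword_cons, ContinuousLinearMap.comp_apply]
          exact hKS i _ ih
      have hspanK : Submodule.span ℂ
          (Set.range fun ω : Words N => Sword S ω.val v₀) ≤ K := by
        rw [Submodule.span_le]
        rintro _ ⟨ω, rfl⟩
        exact hword ω.val
      have htop : (Submodule.span ℂ
          (Set.range fun ω : Words N => Sword S ω.val v₀)).topologicalClosure ≤ K :=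
        Submodule.topologicalClosure_minimal _ hspanK hKc
      rw [hdense] at htop
      exact top_le_iff.mp htop
  · intro hirr
    refine ⟨horth, ?_⟩
    set V := Submodule.span ℂ (Set.range fun ω : Words N => Sword S ω.val v₀) with hV
    have hmem : ∀ l : List (Fin N), l.getLast? ≠ some 0 → Sword S l v₀ ∈ V := by
      intro l hl
      exact Submodule.subset_span ⟨⟨l, hl⟩, rfl⟩
    have hSV : ∀ (i : Fin N), ∀ u ∈ V, S i u ∈ V := by
      intro i u hu
      rw [hV] at hu
      induction hu using Submodule.span_induction with
      | mem w hw =>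
        obtain ⟨ω, rfl⟩ := hw
        obtain ⟨l, hl⟩ := ω
        cases l with
        | nil =>
          simp only [Sword_nil, ContinuousLinearMap.one_apply]
          by_cases hi : i = 0
          · subst hi; rw [h0]; exact hmem [] (by simp)
          · have hiw : S i v₀ = Sword S [i] v₀ := rfl
            rw [hiw]
            exact hmem [i] (by simp [hi])
        | cons j l' =>
          have hiw : S i (Sword S (j :: l') v₀) = Sword S (i :: j :: l') v₀ := rfl
          rw [hiw]
          exact hmem _ (by rw [List.getLast?_cons_cons]; exact hl)
      | zero => rw [map_zero]; exact V.zero_mem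
      | add a b ha hb iha ihb => rw [map_add]; exact V.add_mem iha ihb
      | smul c a ha iha => rw [map_smul]; exact V.smul_mem c iha
    have hSadjV : ∀ (i : Fin N), ∀ u ∈ V, adjoint (S i) u ∈ V := by
      intro i u hu
      rw [hV] at hu
      induction hu using Submodule.span_induction with
      | mem w hw =>
        obtain ⟨ω, rfl⟩ := hw
        obtain ⟨l, hl⟩ := ω
        cases l with
        | nil =>
          simp only [Sword_nil, ContinuousLinearMap.one_apply]
          have hiw : adjoint (S i) v₀ = if i = 0 then v₀ else 0 := by
            conv_lhs => rw [← h0]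
            rw [SadjS hcuntz1]
          rw [hiw]
          split_ifs
          · exact hmem [] (by simp)
          · exact V.zero_mem
        | cons j l' =>
          have hiw : adjoint (S i) (Sword S (j :: l') v₀)
              = if i = j then Sword S l' v₀ else 0 := by
            rw [Sword_cons, ContinuousLinearMap.comp_apply, SadjS hcuntz1]
          rw [hiw]
          split_ifs
          · exact hmem l' (tail_valid hl)
          · exact V.zero_mem
      | zero => rw [map_zero]; exact V.zero_mem
      | add a b ha hb iha ihb => rw [map_add]; exact V.add_mem iha ihb
      | smul c a ha iha => rw [map_smul]; exact V.smul_mem c iha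
    have hcl : ∀ (A : H →L[ℂ] H), (∀ u ∈ V, A u ∈ V) →
        ∀ x ∈ V.topologicalClosure, A x ∈ V.topologicalClosure := by
      intro A hA x hx
      have hsub : (V : Set H) ⊆ A ⁻¹' (V.topologicalClosure : Set H) :=
        fun u hu => V.le_topologicalClosure (hA u hu)
      have hclos : closure (V : Set H) ⊆ A ⁻¹' (V.topologicalClosure : Set H) :=
        closure_minimal hsub ((V.isClosed_topologicalClosure).preimage A.continuous)
      have hx' : x ∈ closure (V : Set H) := by
        rw [← Submodule.topologicalClosure_coe]
        exact hx
      exact hclos hx'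
    rcases hirr V.topologicalClosure V.isClosed_topologicalClosure
        (fun i x hx => hcl (S i) (hSV i) x hx)
        (fun i x hx => hcl (adjoint (S i)) (hSadjV i) x hx) with hbot | htop
    · exfalso
      have hv₀V : v₀ ∈ V.topologicalClosure := by
        apply V.le_topologicalClosure
        have := hmem [] (by simp)
        rwa [Sword_nil, ContinuousLinearMap.one_apply] at this
      rw [hbot] at hv₀V
      have hz : v₀ = 0 := (Submodule.mem_bot ℂ).mp hv₀V
      rw [hz, norm_zero] at hv₀
      exact one_ne_zero hv₀.symm
    · exact htop
end

section
/- Define operators s_i on ℓ²(Ω), where Ω is the set of finite words over {0,...,N-1} not ending in 0 (including the empty word ∅), by s_0 e_∅ = e_∅, s_0 e_ω = e_{0ω} for ω ≠ ∅, and s_i e_ω = e_{iω} for i ≠ 0. Then the s_i satisfy the Cuntz relations: s_i* s_j = δ_{ij} I and Σ_{i=0}^{N-1} s_i s_i* = I. -/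
open ContinuousLinearMap

/-- Prepending a digit to a word in `Ω`: `cons i ω = iω`, except `cons 0 ∅ = ∅`
(implementing `s_0 e_∅ = e_∅`, `s_0 e_ω = e_{0ω}` for `ω ≠ ∅`, `s_i e_ω = e_{iω}`). -/
def consW {N : ℕ} [NeZero N] (i : Fin N) (ω : Words N) : Words N :=
  if h : ω.val = [] ∧ i = 0 then ω
  else ⟨i :: ω.val, by
    rcases ω with ⟨l, hl⟩
    match l with
    | [] =>
      simp only [List.getLast?_singleton, ne_eq, Option.some.injEq]
      exact fun hi => h ⟨rfl, hi⟩
    | a :: l' => simpa [List.getLast?_cons_cons] using hl⟩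

lemma consW_inj {N : ℕ} [NeZero N] {i j : Fin N} {ω σ : Words N}
    (h : consW i ω = consW j σ) : i = j ∧ ω = σ := by
  unfold consW at h
  by_cases h1 : ω.val = [] ∧ i = 0 <;> by_cases h2 : σ.val = [] ∧ j = 0 <;> simp only [h1, h2, dite_true, dite_false, and_self, not_false_eq_true, reduceDIte] at h
  · exact ⟨h1.2.trans h2.2.symm, h⟩
  · exfalso
    have := congrArg Subtype.val h
    rw [h1.1] at this
    exact List.cons_ne_nil _ _ this.symm
  · exfalso
    have := congrArg Subtype.val h
    rw [h2.1] at this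
    exact List.cons_ne_nil _ _ this
  · have := congrArg Subtype.val h
    simp only [List.cons.injEq] at this
    exact ⟨this.1, Subtype.ext this.2⟩

lemma consW_surj {N : ℕ} [NeZero N] (τ : Words N) :
    ∃ i ω, consW i ω = τ := by
  rcases τ with ⟨l, hl⟩
  match l with
  | [] =>
    refine ⟨0, ⟨[], hl⟩, ?_⟩
    unfold consW
    exact dif_pos ⟨rfl, rfl⟩
  | i :: l' =>
    have hl' : l'.getLast? ≠ some 0 := by
      match l' with
      | [] => simp
      | b :: l'' => simpa [List.getLast?_cons_cons] using hl
    refine ⟨i, ⟨l', hl'⟩, ?_⟩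
    unfold consW
    refine dif_neg ?_
    rintro ⟨h1, h2⟩
    apply hl
    simp only at h1
    subst h1 h2
    simp

lemma inner_ext {H : Type*} [NormedAddCommGroup H] [InnerProductSpace ℂ H]
    [CompleteSpace H] {N : ℕ} [NeZero N] (e : HilbertBasis (Words N) ℂ H)
    {x y : H} (h : ∀ σ, (inner ℂ (e σ) x : ℂ) = inner ℂ (e σ) y) : x = y := by
  apply e.repr.injective
  ext σ
  rw [e.repr_apply_apply, e.repr_apply_apply, h]

/-- The operators `s_i` on `ℓ²(Ω)` defined on the canonical orthonormal
basis `(e_ω)` by `s_0 e_∅ = e_∅`, `s_0 e_ω = e_{0ω}` (`ω ≠ ∅`), `s_i e_ω = e_{iω}`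
(`i ≠ 0`) satisfy the Cuntz relations `s_i* s_j = δ_{ij} I` and `∑ s_i s_i* = I`. -/
theorem stmt_5 {H : Type*} [NormedAddCommGroup H] [InnerProductSpace ℂ H]
    [CompleteSpace H] {N : ℕ} [NeZero N]
    (e : HilbertBasis (Words N) ℂ H)
    (s : Fin N → H →L[ℂ] H)
    (hs : ∀ (i : Fin N) (ω : Words N), s i (e ω) = e (consW i ω)) :
    (∀ i j, adjoint (s i) ∘L s j = if i = j then 1 else 0) ∧
      ∑ i : Fin N, s i ∘L adjoint (s i) = 1 := by
  classical
  have ortho := e.orthonormal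
  rw [orthonormal_iff_ite] at ortho
  -- adjoint action on basis vectors
  have hadj : ∀ (i : Fin N) (τ σ : Words N),
      (inner ℂ (e σ) (adjoint (s i) (e τ)) : ℂ) = if consW i σ = τ then 1 else 0 := by
    intro i τ σ
    rw [adjoint_inner_right, hs, ortho]
  have hadjA : ∀ (i : Fin N) (ω : Words N), adjoint (s i) (e (consW i ω)) = e ω := by
    intro i ω
    apply inner_ext e
    intro σ
    rw [hadj, ortho]
    congr 1
    simp only [eq_iff_iff]
    constructor
    · exact fun h => (consW_inj h).2
    · rintro rfl; rfl
  have hadjB : ∀ (i : Fin N) (τ : Words N), (∀ ω, consW i ω ≠ τ) →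
      adjoint (s i) (e τ) = 0 := by
    intro i τ hτ
    apply inner_ext e
    intro σ
    rw [hadj, if_neg (hτ σ), inner_zero_right]
  have hd : Dense (Submodule.span ℂ (Set.range (e : Words N → H)) : Set H) := by
    rw [Submodule.dense_iff_topologicalClosure_eq_top]
    exact e.dense_span
  constructor
  · intro i j
    apply ContinuousLinearMap.ext_on hd
    rintro _ ⟨ω, rfl⟩
    rw [ContinuousLinearMap.comp_apply, hs]
    by_cases hij : i = j
    · subst hij
      rw [hadjA, if_pos rfl, ContinuousLinearMap.one_apply]
    · rw [hadjB i _ (fun σ h => hij ((consW_inj h).1)), if_neg hij,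
        ContinuousLinearMap.zero_apply]
  · apply ContinuousLinearMap.ext_on hd
    rintro _ ⟨τ, rfl⟩
    obtain ⟨i₀, ω₀, rfl⟩ := consW_surj τ
    rw [ContinuousLinearMap.sum_apply, ContinuousLinearMap.one_apply]
    rw [Finset.sum_eq_single i₀]
    · rw [ContinuousLinearMap.comp_apply, hadjA, hs]
    · intro i _ hi
      rw [ContinuousLinearMap.comp_apply,
        hadjB i _ (fun σ h => hi ((consW_inj h).1)), map_zero]
    · intro h; exact absurd (Finset.mem_univ i₀) h
end

section
/- The representation (s_i)_{i=0}^{N-1} of the Cuntz algebra O_N on ℓ²(Ω) defined by s_0 e_∅ = e_∅, s_0 e_ω = e_{0ω} (ω ≠ ∅), s_i e_ω = e_{iω} (i ≠ 0) is irreducible: any bounded operator commuting with all s_i and s_i* is a scalar multiple of the identity. -/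
open ContinuousLinearMap

/-- The representation `(s_i)` of the Cuntz algebra `O_N` on `ℓ²(Ω)` given
on the canonical basis by `s_0 e_∅ = e_∅`, `s_0 e_ω = e_{0ω}` (`ω ≠ ∅`),
`s_i e_ω = e_{iω}` (`i ≠ 0`) is irreducible: any bounded operator commuting with all
`s_i` and `s_i*` is a scalar multiple of the identity. -/
theorem stmt_6 {H : Type*} [NormedAddCommGroup H] [InnerProductSpace ℂ H]
    [CompleteSpace H] {N : ℕ} [NeZero N]
    (e : HilbertBasis (Words N) ℂ H)
    (s : Fin N → H →L[ℂ] H)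
    (hs : ∀ (i : Fin N) (ω : Words N), s i (e ω) = e (consW i ω))
    (hcuntz1 : ∀ i j, adjoint (s i) ∘L s j = if i = j then 1 else 0)
    (hcuntz2 : ∑ i : Fin N, s i ∘L adjoint (s i) = 1)
    (T : H →L[ℂ] H)
    (hT : ∀ i, T ∘L s i = s i ∘L T ∧ T ∘L adjoint (s i) = adjoint (s i) ∘L T) :
    ∃ c : ℂ, T = c • (1 : H →L[ℂ] H) := by
  classical
  obtain ⟨em, hem⟩ : ∃ ω : Words N, ω.val = [] := ⟨⟨[], by simp⟩, rfl⟩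
  have horth : ∀ ω τ : Words N, inner ℂ (e ω) (e τ) = if ω = τ then (1 : ℂ) else 0 :=
    orthonormal_iff_ite.mp e.orthonormal
  have hc0 : consW (0 : Fin N) em = em := by
    unfold consW; exact dif_pos ⟨hem, rfl⟩
  have hs0v : s 0 (e em) = e em := by rw [hs, hc0]
  have hadj : ∀ i : Fin N, adjoint (s i) (e em) = if i = 0 then e em else 0 := by
    intro i
    conv_lhs => rw [← hs0v]
    rw [← ContinuousLinearMap.comp_apply, hcuntz1]
    split <;> simp
  have key : ∀ l : List (Fin N), ∀ h : l.getLast? ≠ some 0, l ≠ [] →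
      inner ℂ (e ⟨l, h⟩) (T (e em)) = (0 : ℂ) := by
    intro l
    induction l with
    | nil => intro h hne; exact absurd rfl hne
    | cons i l ih =>
      intro h _
      have hl : l.getLast? ≠ some 0 := by
        match l with
        | [] => simp
        | a :: l' => simpa [List.getLast?_cons_cons] using h
      have hcons : consW i ⟨l, hl⟩ = (⟨i :: l, h⟩ : Words N) := by
        unfold consW
        have hno : ¬ (((⟨l, hl⟩ : Words N)).val = [] ∧ i = 0) := by
          rintro ⟨h1, h2⟩
          apply h
          subst h2
          simp only at h1
          subst h1
          simp
        exact dif_neg hno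
      have he : e ⟨i :: l, h⟩ = s i (e ⟨l, hl⟩) := (congrArg e hcons).symm.trans (hs i _).symm
      rw [he, ← adjoint_inner_right, ← ContinuousLinearMap.comp_apply, ← (hT i).2,
        ContinuousLinearMap.comp_apply, hadj]
      by_cases hi : i = 0
      · subst hi
        simp only [if_pos rfl]
        have hlne : l ≠ [] := by
          rintro rfl
          simp at h
        exact ih hl hlne
      · simp [hi]
  set c : ℂ := inner ℂ (e em) (T (e em)) with hc
  have hTv : T (e em) = c • e em := by
    apply e.repr.injective
    ext ω
    rw [LinearIsometryEquiv.map_smul]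
    have h2 : (c • e.repr (e em)) ω = c * e.repr (e em) ω := rfl
    rw [h2, e.repr_apply_apply, e.repr_apply_apply]
    rcases ω with ⟨l, h⟩
    rcases eq_or_ne l [] with rfl | hne
    · have hle : (⟨[], h⟩ : Words N) = em := Subtype.ext hem.symm
      rw [hle, horth em em, if_pos rfl, mul_one, hc]
    · have hle : (⟨l, h⟩ : Words N) ≠ em := by
        intro hcontra
        exact hne ((congrArg Subtype.val hcontra).trans hem)
      rw [key l h hne, horth ⟨l, h⟩ em]; exact (mul_eq_zero_of_right c (if_neg hle)).symm
  have hTe : ∀ l : List (Fin N), ∀ h : l.getLast? ≠ some 0,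
      T (e ⟨l, h⟩) = c • e ⟨l, h⟩ := by
    intro l
    induction l with
    | nil =>
      intro h
      have hle : (⟨[], h⟩ : Words N) = em := Subtype.ext hem.symm
      rw [hle]; exact hTv
    | cons i l ih =>
      intro h
      have hl : l.getLast? ≠ some 0 := by
        match l with
        | [] => simp
        | a :: l' => simpa [List.getLast?_cons_cons] using h
      have hcons : consW i ⟨l, hl⟩ = (⟨i :: l, h⟩ : Words N) := by
        unfold consW
        have hno : ¬ (((⟨l, hl⟩ : Words N)).val = [] ∧ i = 0) := by
          rintro ⟨h1, h2⟩
          apply h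
          subst h2
          simp only at h1
          subst h1
          simp
        exact dif_neg hno
      have he : e ⟨i :: l, h⟩ = s i (e ⟨l, hl⟩) := (congrArg e hcons).symm.trans (hs i _).symm
      rw [he, ← ContinuousLinearMap.comp_apply, (hT i).1, ContinuousLinearMap.comp_apply,
        ih hl, map_smul]
  refine ⟨c, ?_⟩
  apply ContinuousLinearMap.ext_on
    (Submodule.dense_iff_topologicalClosure_eq_top.mpr e.dense_span)
  rintro x ⟨ω, rfl⟩
  rcases ω with ⟨l, h⟩
  simpa using hTe l h
end

section
/- Let A and B be N×N unitary matrices with constant first row 1/√N, and let W_n^A, W_n^B be the corresponding generalized Walsh functions. For m, n < N^p with base-N digits (m_k), (n_k), the inner product ⟨W_n^B, W_m^A⟩ in L²[0,1] equals (BA*)_{n_1 m_1} (BA*)_{n_2 m_2} ··· (BA*)_{n_p m_p}, i.e., the (n,m) entry of (BA*)^{⊗p}. -/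
noncomputable def kron {N M : ℕ} [NeZero N] (A : Matrix (Fin N) (Fin N) ℂ)
    (B : Matrix (Fin M) (Fin M) ℂ) : Matrix (Fin (N * M)) (Fin (N * M)) ℂ :=
  fun i j =>
    A ⟨i.val % N, Nat.mod_lt _ (Nat.pos_of_ne_zero (NeZero.ne N))⟩
      ⟨j.val % N, Nat.mod_lt _ (Nat.pos_of_ne_zero (NeZero.ne N))⟩ *
    B ⟨i.val / N, (Nat.div_lt_iff_lt_mul (Nat.pos_of_ne_zero (NeZero.ne N))).mpr
        (mul_comm N M ▸ i.isLt)⟩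
      ⟨j.val / N, (Nat.div_lt_iff_lt_mul (Nat.pos_of_ne_zero (NeZero.ne N))).mpr
        (mul_comm N M ▸ j.isLt)⟩

noncomputable def kronPow {N : ℕ} [NeZero N] (A : Matrix (Fin N) (Fin N) ℂ) :
    (p : ℕ) → Matrix (Fin (N ^ p)) (Fin (N ^ p)) ℂ
  | 0 => 1
  | p + 1 => Matrix.reindex (finCongr (by rw [pow_succ]; ring)) (finCongr (by rw [pow_succ]; ring))
      (kron A (kronPow A p))

open MeasureTheory Matrix

/-- The k-th base-N digit (least significant first) of a natural number j. -/
def nDigit (N k j : ℕ) : ℕ := j / N ^ k % N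

/-- The generalized Walsh function `W_n^A` at level `p`: on the interval
`[j/N^p, (j+1)/N^p)` it takes the value `√(N^p) · a_{n₁ j₁} ⋯ a_{n_p j_p}`,
where `n = n₁ + N n₂ + ⋯` and `j₁ j₂ ⋯ j_p` are the base-N digits of `j`
(most significant first). -/
noncomputable def walshFn {N : ℕ} [NeZero N] (A : Matrix (Fin N) (Fin N) ℂ) (p : ℕ)
    (n : Fin (N ^ p)) (x : ℝ) : ℂ :=
  Real.sqrt (N ^ p) *
    ∏ k ∈ Finset.range p,
      A ⟨nDigit N k n.val, Nat.mod_lt _ (Nat.pos_of_ne_zero (NeZero.ne N))⟩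
        ⟨nDigit N (p - 1 - k) ⌊(N : ℝ) ^ p * x⌋₊, Nat.mod_lt _ (Nat.pos_of_ne_zero (NeZero.ne N))⟩

/-- The k-th base-N digit as an element of `Fin N`. -/
def digF (N : ℕ) [NeZero N] (k j : ℕ) : Fin N :=
  ⟨nDigit N k j, Nat.mod_lt _ (Nat.pos_of_ne_zero (NeZero.ne N))⟩

lemma digF_symm {N p : ℕ} [NeZero N] (j : Fin (N ^ p)) (k : Fin p) :
    finFunctionFinEquiv.symm j k = digF N k.val j.val := rfl

lemma sum_digits {N : ℕ} [NeZero N] (p : ℕ) (F : ℕ → Fin N → ℂ) :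
    ∑ j ∈ Finset.range (N ^ p), ∏ k ∈ Finset.range p, F k (digF N k j) =
      ∏ k ∈ Finset.range p, ∑ d : Fin N, F k d := by
  rw [← Fin.sum_univ_eq_sum_range (fun j => ∏ k ∈ Finset.range p, F k (digF N k j))]
  have h1 : ∀ j : Fin (N ^ p), ∏ k ∈ Finset.range p, F k (digF N k j.val)
      = ∏ k : Fin p, F k.val (finFunctionFinEquiv.symm j k) := by
    intro j
    rw [← Fin.prod_univ_eq_prod_range (fun k => F k (digF N k j.val))]
    exact Finset.prod_congr rfl fun k _ => by rw [digF_symm]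
  simp_rw [h1]
  rw [Equiv.sum_comp finFunctionFinEquiv.symm
    (fun f : Fin p → Fin N => ∏ k : Fin p, F k.val (f k))]
  rw [← Fin.prod_univ_eq_prod_range (fun k => ∑ d : Fin N, F k d)]
  rw [Finset.prod_univ_sum (fun _ : Fin p => (Finset.univ : Finset (Fin N)))
    (fun k d => F k.val d), Fintype.piFinset_univ]

lemma kronPow_apply {N : ℕ} [NeZero N] (C : Matrix (Fin N) (Fin N) ℂ) (p : ℕ)
    (n m : Fin (N ^ p)) :
    kronPow C p n m = ∏ k ∈ Finset.range p, C (digF N k n.val) (digF N k m.val) := by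
  induction p with
  | zero =>
    have h : n = m := by
      apply Fin.ext
      have h1 := n.isLt; have h2 := m.isLt
      simp only [pow_zero] at h1 h2; omega
    show (1 : Matrix (Fin (N ^ 0)) (Fin (N ^ 0)) ℂ) n m = _
    rw [h, Matrix.one_apply_eq, Finset.range_zero, Finset.prod_empty]
  | succ p ih =>
    show Matrix.reindex _ _ (kron C (kronPow C p)) n m = _
    rw [Matrix.reindex_apply, Matrix.submatrix_apply, kron, ih]
    rw [Finset.prod_range_succ', mul_comm]
    congr 1
    · refine Finset.prod_congr rfl fun k _ => ?_
      congr 1 <;> apply Fin.ext <;>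
        simp [digF, nDigit, Nat.div_div_eq_div_mul, pow_succ, finCongr, mul_comm]
    · congr 1 <;> apply Fin.ext <;> simp [digF, nDigit, finCongr]

lemma floor_eq_on {Mn : ℕ} {j : ℕ} {x : ℝ} (hM : 0 < Mn)
    (hx : x ∈ Set.Ioo ((j : ℝ) / Mn) ((j + 1 : ℕ) / Mn)) : ⌊(Mn : ℝ) * x⌋₊ = j := by
  have hMr : (0 : ℝ) < Mn := by exact_mod_cast hM
  obtain ⟨h1, h2⟩ := hx
  have hj : (j : ℝ) < Mn * x := by
    rw [div_lt_iff₀ hMr] at h1; linarith [h1]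
  have hj2 : (Mn : ℝ) * x < j + 1 := by
    rw [lt_div_iff₀ hMr] at h2; push_cast at h2 ⊢; linarith
  rw [Nat.floor_eq_iff (le_of_lt (lt_of_le_of_lt (Nat.cast_nonneg j) hj))]
  exact ⟨hj.le, hj2⟩

lemma step_integral {Mn : ℕ} (g : ℕ → ℂ) (hM : 0 < Mn)
    (f : ℝ → ℂ) (hf : ∀ x, f x = g ⌊(Mn : ℝ) * x⌋₊) :
    ∫ x in Set.Icc (0 : ℝ) 1, f x = ∑ j ∈ Finset.range Mn, ((Mn : ℝ)⁻¹ : ℝ) • g j := by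
  have hMr : (0 : ℝ) < Mn := by exact_mod_cast hM
  set a : ℕ → ℝ := fun j => (j : ℝ) / Mn with ha
  have hle : ∀ j : ℕ, a j ≤ a (j + 1) := by
    intro j
    rw [ha, div_le_div_iff_of_pos_right hMr]
    push_cast; linarith
  have hconst : ∀ j : ℕ, ∀ x ∈ Set.Ioo (a j) (a (j + 1)), f x = g j := by
    intro j x hx
    rw [hf x, floor_eq_on hM hx]
  have hae : ∀ j : ℕ, f =ᵐ[volume.restrict (Set.Ioc (a j) (a (j + 1)))] fun _ => g j := by
    intro j
    rw [← Measure.restrict_congr_set Ioo_ae_eq_Ioc]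
    exact (ae_restrict_mem measurableSet_Ioo).mono fun x hx => hconst j x hx
  have hint : ∀ j : ℕ, IntervalIntegrable f volume (a j) (a (j + 1)) := by
    intro j
    rw [intervalIntegrable_iff_integrableOn_Ioc_of_le (hle j)]
    exact (integrableOn_const measure_Ioc_lt_top.ne).congr (hae j).symm
  have hval : ∀ j : ℕ, (∫ x in a j..a (j + 1), f x) = ((Mn : ℝ)⁻¹ : ℝ) • g j := by
    intro j
    rw [intervalIntegral.integral_of_le (hle j), integral_congr_ae (hae j),
      setIntegral_const, Real.volume_real_Ioc_of_le (hle j)]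
    congr 1
    rw [ha]; push_cast; field_simp; ring
  have h0 : a 0 = 0 := by simp [ha]
  have h1 : a Mn = 1 := by rw [ha]; field_simp
  calc ∫ x in Set.Icc (0:ℝ) 1, f x = ∫ x in (0:ℝ)..1, f x := by
        rw [intervalIntegral.integral_of_le zero_le_one, integral_Icc_eq_integral_Ioc]
    _ = ∑ j ∈ Finset.range Mn, ∫ x in a j..a (j + 1), f x := by
        rw [intervalIntegral.sum_integral_adjacent_intervals (fun k _ => hint k), h0, h1]
    _ = ∑ j ∈ Finset.range Mn, ((Mn : ℝ)⁻¹ : ℝ) • g j :=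
        Finset.sum_congr rfl fun j _ => hval j

/-- Change of basis between generalized Walsh bases:
`⟨W_n^B, W_m^A⟩ = (BA*)^{⊗p}_{nm}`. -/
theorem stmt_8 {N : ℕ} [NeZero N] (A B : Matrix (Fin N) (Fin N) ℂ)
    (hA : A ∈ Matrix.unitaryGroup (Fin N) ℂ) (hB : B ∈ Matrix.unitaryGroup (Fin N) ℂ)
    (hrowA : ∀ j, A 0 j = ((Real.sqrt N)⁻¹ : ℝ)) (hrowB : ∀ j, B 0 j = ((Real.sqrt N)⁻¹ : ℝ))
    (p : ℕ) (n m : Fin (N ^ p)) :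
    ∫ x in Set.Icc (0 : ℝ) 1, walshFn B p n x * (starRingEnd ℂ) (walshFn A p m x) =
      kronPow (B * Aᴴ) p n m := by
  classical
  have hN : 0 < N := Nat.pos_of_ne_zero (NeZero.ne N)
  have hM : 0 < N ^ p := pow_pos hN p
  set G : ℕ → ℂ := fun j => ∏ k ∈ Finset.range p,
    (B (digF N k n.val) (digF N (p - 1 - k) j) *
      (starRingEnd ℂ) (A (digF N k m.val) (digF N (p - 1 - k) j))) with hG
  have hf : ∀ x : ℝ, walshFn B p n x * (starRingEnd ℂ) (walshFn A p m x)
      = ((N ^ p : ℕ) : ℂ) * G ⌊((N ^ p : ℕ) : ℝ) * x⌋₊ := by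
    intro x
    have hcast : ((N ^ p : ℕ) : ℝ) = (N : ℝ) ^ p := by push_cast; ring
    rw [hcast]
    simp only [walshFn, hG, _root_.map_mul, Complex.conj_ofReal, _root_.map_prod]
    rw [mul_mul_mul_comm, ← Complex.ofReal_mul,
      Real.mul_self_sqrt (by positivity), ← Finset.prod_mul_distrib]
    push_cast
    rfl
  rw [step_integral (fun j => ((N ^ p : ℕ) : ℂ) * G j) hM
      (fun x => walshFn B p n x * (starRingEnd ℂ) (walshFn A p m x)) hf]
  have hsmul : ∀ j : ℕ, (((N ^ p : ℕ) : ℝ)⁻¹ : ℝ) • (((N ^ p : ℕ) : ℂ) * G j) = G j := by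
    intro j
    have hne : ((N ^ p : ℕ) : ℂ) ≠ 0 := Nat.cast_ne_zero.2 hM.ne'
    rw [Complex.real_smul, Complex.ofReal_inv, Complex.ofReal_natCast,
      ← mul_assoc, inv_mul_cancel₀ hne, one_mul]
  simp_rw [hsmul]
  have hGalt : ∀ j : ℕ, G j = ∏ k ∈ Finset.range p,
      (B (digF N (p - 1 - k) n.val) (digF N k j) *
        (starRingEnd ℂ) (A (digF N (p - 1 - k) m.val) (digF N k j))) := by
    intro j
    rw [hG]
    rw [← Finset.prod_range_reflect (fun k => B (digF N (p - 1 - k) n.val) (digF N k j) *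
      (starRingEnd ℂ) (A (digF N (p - 1 - k) m.val) (digF N k j))) p]
    refine Finset.prod_congr rfl fun k hk => ?_
    have hk' : k ≤ p - 1 := Nat.le_sub_one_of_lt (Finset.mem_range.1 hk)
    rw [Nat.sub_sub_self hk']
  simp_rw [hGalt]
  rw [sum_digits p (fun k d => B (digF N (p - 1 - k) n.val) d *
    (starRingEnd ℂ) (A (digF N (p - 1 - k) m.val) d))]
  rw [kronPow_apply]
  rw [← Finset.prod_range_reflect
    (fun k => (B * Aᴴ) (digF N k n.val) (digF N k m.val)) p]
  refine Finset.prod_congr rfl fun k _ => ?_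
  rw [Matrix.mul_apply]
  refine Finset.sum_congr rfl fun d _ => ?_
  rw [Matrix.conjTranspose_apply]
  rfl
end

section
/- Let A be an n×n unitary matrix and M := max_{i,j} |A_{ij}|. Then for every nonzero f ∈ ℂⁿ, |supp(f)| · |supp(Af)| ≥ 1/M², where supp denotes the set of nonzero coordinates. -/
noncomputable def suppCard {n : ℕ} (f : Fin n → ℂ) : ℕ := (Function.support f).ncard

noncomputable def mu {n : ℕ} (A : Matrix (Fin n) (Fin n) ℂ) : ℕ :=
  sInf {m | ∃ f : Fin n → ℂ, f ≠ 0 ∧ m = suppCard f * suppCard (A.mulVec f)}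

/-- Uncertainty principle for unitary matrices:
`|supp(f)| * |supp(Af)| ≥ 1/M²` where `M = max |A_{ij}|`. -/
theorem stmt_10 {n : ℕ} (hn : 0 < n) (A : Matrix (Fin n) (Fin n) ℂ)
    (hA : A ∈ Matrix.unitaryGroup (Fin n) ℂ) (M : ℝ)
    (hM : IsGreatest (Set.range fun q : Fin n × Fin n => ‖A q.1 q.2‖) M)
    (f : Fin n → ℂ) (hf : f ≠ 0) :
    1 / M ^ 2 ≤ (suppCard f : ℝ) * (suppCard (A.mulVec f) : ℝ) := by
  unfold suppCard
  classical
  set g := A.mulVec f with hg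
  have hstar : star A * A = 1 := (Unitary.mem_iff.mp hA).1
  have hinv : (star A).mulVec g = f := by
    rw [hg, Matrix.mulVec_mulVec, hstar, Matrix.one_mulVec]
  have hMle : ∀ p q : Fin n, ‖A p q‖ ≤ M := fun p q => hM.2 ⟨(p, q), rfl⟩
  have hM0 : 0 ≤ M := by
    obtain ⟨q, hq⟩ := hM.1
    exact hq ▸ norm_nonneg _
  have hMpos : 0 < M := by
    rcases hM0.lt_or_eq with h | h
    · exact h
    · exfalso
      have hA0 : A = 0 := by
        ext p q
        have := hMle p q
        rw [← h] at this
        exact norm_eq_zero.mp (le_antisymm this (norm_nonneg _))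
      apply hf
      rw [← hinv, hg, hA0]
      simp [Matrix.mulVec]
  -- support finsets
  set s := (Function.support f).toFinset with hs
  set t := (Function.support g).toFinset with ht
  -- pick i maximizing |f i|
  obtain ⟨i, -, hi⟩ := Finset.exists_max_image (Finset.univ : Finset (Fin n))
    (fun k => ‖f k‖) ⟨⟨0, hn⟩, Finset.mem_univ _⟩
  have hCpos : 0 < ‖f i‖ := by
    obtain ⟨k, hk⟩ := Function.ne_iff.mp hf
    exact lt_of_lt_of_le (by simpa using hk) (hi k (Finset.mem_univ k))
  set C := ‖f i‖ with hC
  have hsum_f : ∑ k, ‖f k‖ ≤ s.card * C := by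
    have h1 : ∑ k, ‖f k‖ = ∑ k ∈ s, ‖f k‖ := by
      refine (Finset.sum_subset (Finset.subset_univ s) ?_).symm
      intro k _ hk
      simp only [hs, Set.mem_toFinset, Function.mem_support, not_not] at hk
      simp [hk]
    rw [h1]
    calc ∑ k ∈ s, ‖f k‖ ≤ ∑ _k ∈ s, C :=
          Finset.sum_le_sum fun k _ => hi k (Finset.mem_univ k)
      _ = s.card * C := by rw [Finset.sum_const, nsmul_eq_mul]
  have hgbound : ∀ j, ‖g j‖ ≤ M * (s.card * C) := by
    intro j
    have : ‖g j‖ ≤ ∑ k, ‖A j k‖ * ‖f k‖ := by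
      rw [hg]
      simp only [Matrix.mulVec, dotProduct]
      refine le_trans (norm_sum_le _ _) ?_
      exact le_of_eq (Finset.sum_congr rfl fun k _ => norm_mul _ _)
    calc ‖g j‖ ≤ ∑ k, ‖A j k‖ * ‖f k‖ := this
      _ ≤ ∑ k, M * ‖f k‖ :=
          Finset.sum_le_sum fun k _ => mul_le_mul_of_nonneg_right (hMle j k) (norm_nonneg _)
      _ = M * ∑ k, ‖f k‖ := by rw [Finset.mul_sum]
      _ ≤ M * (s.card * C) := mul_le_mul_of_nonneg_left hsum_f hM0
  have hsum_g : ∑ j, ‖g j‖ ≤ t.card * (M * (s.card * C)) := by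
    have h1 : ∑ j, ‖g j‖ = ∑ j ∈ t, ‖g j‖ := by
      refine (Finset.sum_subset (Finset.subset_univ t) ?_).symm
      intro j _ hj
      simp only [ht, Set.mem_toFinset, Function.mem_support, not_not] at hj
      simp [hj]
    rw [h1]
    calc ∑ j ∈ t, ‖g j‖ ≤ ∑ _j ∈ t, M * (s.card * C) :=
          Finset.sum_le_sum fun j _ => hgbound j
      _ = t.card * (M * (s.card * C)) := by rw [Finset.sum_const, nsmul_eq_mul]
  have hfi : C ≤ M * ∑ j, ‖g j‖ := by
    have hfe : f i = ∑ j, star A i j * g j := by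
      rw [← hinv]; simp [Matrix.mulVec, dotProduct]
    calc C = ‖∑ j, star A i j * g j‖ := by rw [hC, hfe]
      _ ≤ ∑ j, ‖star A i j‖ * ‖g j‖ := by
          refine le_trans (norm_sum_le _ _) ?_
          exact le_of_eq (Finset.sum_congr rfl fun j _ => norm_mul _ _)
      _ ≤ ∑ j, M * ‖g j‖ := by
          refine Finset.sum_le_sum fun j _ => mul_le_mul_of_nonneg_right ?_ (norm_nonneg _)
          simpa [Matrix.star_apply, Complex.norm_conj] using hMle j i
      _ = M * ∑ j, ‖g j‖ := by rw [Finset.mul_sum]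
  have key : C ≤ M ^ 2 * ((s.card : ℝ) * t.card) * C := by
    calc C ≤ M * ∑ j, ‖g j‖ := hfi
      _ ≤ M * (t.card * (M * (s.card * C))) := mul_le_mul_of_nonneg_left hsum_g hM0
      _ = M ^ 2 * ((s.card : ℝ) * t.card) * C := by ring
  have h1le : 1 ≤ M ^ 2 * ((s.card : ℝ) * t.card) :=
    le_of_mul_le_mul_right (by linarith [key]) hCpos
  have hcards : ((Function.support f).ncard : ℝ) = s.card ∧
      ((Function.support g).ncard : ℝ) = t.card := by
    constructor <;> rw [Set.ncard_eq_toFinset_card']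
  rw [hcards.1, hcards.2, div_le_iff₀ (by positivity : (0:ℝ) < M ^ 2)]
  linarith [h1le]
end

section
/- Let A be an N×N matrix such that √N·A is a Hadamard matrix (all entries of √N·A have absolute value 1 and A is unitary). Then the uncertainty constant μ(A) := min over nonzero f ∈ ℂ^N of |supp(f)|·|supp(Af)| equals exactly N. -/
open Finset Matrix in
lemma energy_eq {N : ℕ} (A : Matrix (Fin N) (Fin N) ℂ)
    (hA : A ∈ Matrix.unitaryGroup (Fin N) ℂ) (f : Fin N → ℂ) :
    ∑ i, Complex.normSq (A.mulVec f i) = ∑ i, Complex.normSq (f i) := by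
  have h1 : star A * A = 1 := hA.1
  have key : star (A.mulVec f) ⬝ᵥ (A.mulVec f) = star f ⬝ᵥ f := by
    rw [Matrix.star_mulVec, Matrix.dotProduct_mulVec, Matrix.vecMul_vecMul,
      ← Matrix.star_eq_conjTranspose, h1, Matrix.vecMul_one]
  have e : ∀ h : Fin N → ℂ, star h ⬝ᵥ h = ((∑ i, Complex.normSq (h i) : ℝ) : ℂ) := by
    intro h
    simp [dotProduct, Complex.normSq_eq_conj_mul_self]
  rw [e, e] at key
  exact_mod_cast key

open Finset in
lemma lower_bound {N : ℕ} (hN : 0 < N) (A : Matrix (Fin N) (Fin N) ℂ)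
    (hA : A ∈ Matrix.unitaryGroup (Fin N) ℂ)
    (hHad : ∀ i j, ‖A i j‖ = 1 / Real.sqrt N)
    (f : Fin N → ℂ) (hf : f ≠ 0) :
    N ≤ suppCard f * suppCard (A.mulVec f) := by
  classical
  set g := A.mulVec f with hg
  set s : Finset (Fin N) := Finset.univ.filter (fun j => f j ≠ 0) with hs
  set t : Finset (Fin N) := Finset.univ.filter (fun i => g i ≠ 0) with ht
  have hsc : suppCard f = s.card := by
    rw [suppCard, Set.ncard_eq_toFinset_card']
    congr 1
    ext j; simp [hs, Function.mem_support]
  have htc : suppCard g = t.card := by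
    rw [suppCard, Set.ncard_eq_toFinset_card']
    congr 1
    ext j; simp [ht, Function.mem_support]
  set E : ℝ := ∑ j, Complex.normSq (f j) with hE
  have hEpos : 0 < E := by
    have : ∃ j, f j ≠ 0 := by
      by_contra h; push_neg at h; exact hf (funext h)
    obtain ⟨j, hj⟩ := this
    apply Finset.sum_pos' (fun i _ => Complex.normSq_nonneg _)
    exact ⟨j, Finset.mem_univ _, Complex.normSq_pos.mpr hj⟩
  have hsum_supp : ∑ j, ‖f j‖ = ∑ j ∈ s, ‖f j‖ := by
    symm
    apply Finset.sum_subset s.subset_univ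
    intro x _ hx
    simp only [hs, Finset.mem_filter, Finset.mem_univ, true_and, not_not] at hx
    simp [hx]
  have hCS : (∑ j ∈ s, ‖f j‖) ^ 2 ≤ s.card * E := by
    calc (∑ j ∈ s, ‖f j‖) ^ 2 ≤ s.card * ∑ j ∈ s, ‖f j‖ ^ 2 :=
          sq_sum_le_card_mul_sum_sq
      _ ≤ s.card * E := by
          apply mul_le_mul_of_nonneg_left _ (Nat.cast_nonneg _)
          rw [hE]
          refine le_trans (le_of_eq ?_) (Finset.sum_le_sum_of_subset_of_nonneg s.subset_univ
            (fun i _ _ => Complex.normSq_nonneg _))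
          exact Finset.sum_congr rfl fun j _ => (Complex.sq_norm _)
  have hNpos : (0:ℝ) < N := Nat.cast_pos.mpr hN
  have hentry : ∀ i, Complex.normSq (g i) ≤ s.card * E / N := by
    intro i
    have h1 : ‖g i‖ ≤ (1 / Real.sqrt N) * ∑ j, ‖f j‖ := by
      calc ‖g i‖ ≤ ∑ j, ‖A i j * f j‖ :=
            norm_sum_le (E := ℂ) Finset.univ (fun j => A i j * f j)
        _ = ∑ j, (1 / Real.sqrt N) * ‖f j‖ := by
            refine Finset.sum_congr rfl fun j _ => ?_
            rw [norm_mul, hHad]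
        _ = (1 / Real.sqrt N) * ∑ j, ‖f j‖ := by rw [Finset.mul_sum]
    have h2 : Complex.normSq (g i) = ‖g i‖ ^ 2 := (Complex.sq_norm _).symm
    rw [h2]
    have h3 : ‖g i‖ ^ 2 ≤ ((1 / Real.sqrt N) * ∑ j, ‖f j‖) ^ 2 :=
      pow_le_pow_left₀ (norm_nonneg _) h1 2
    refine h3.trans ?_
    rw [mul_pow, div_pow, one_pow, Real.sq_sqrt hNpos.le, hsum_supp]
    rw [div_mul_eq_mul_div, one_mul, div_le_div_iff₀ hNpos hNpos]
    exact mul_le_mul_of_nonneg_right hCS hNpos.le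
  have hsum_g : E = ∑ i ∈ t, Complex.normSq (g i) := by
    rw [hE, ← energy_eq A hA f, ← hg]
    symm
    apply Finset.sum_subset t.subset_univ
    intro x _ hx
    simp only [ht, Finset.mem_filter, Finset.mem_univ, true_and, not_not] at hx
    simp [hx]
  have hfinal : E ≤ t.card * (s.card * E / N) := by
    calc E = ∑ i ∈ t, Complex.normSq (g i) := hsum_g
      _ ≤ ∑ _i ∈ t, ((s.card : ℝ) * E / N) := Finset.sum_le_sum fun i _ => hentry i
      _ = t.card * (s.card * E / N) := by rw [Finset.sum_const, nsmul_eq_mul]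
  have h2 : E * N ≤ (t.card : ℝ) * s.card * E := by
    have hm := mul_le_mul_of_nonneg_right hfinal hNpos.le
    calc E * N ≤ ((t.card : ℝ) * (s.card * E / N)) * N := hm
      _ = (t.card : ℝ) * s.card * E := by field_simp
  have hfin : (N : ℝ) ≤ (s.card : ℝ) * t.card := by nlinarith [h2, hEpos]
  rw [hsc, htc]
  exact_mod_cast hfin

/-- For a (scaled) complex Hadamard matrix, the uncertainty constant equals N. -/
theorem stmt_11 {N : ℕ} (hN : 0 < N) (A : Matrix (Fin N) (Fin N) ℂ)
    (hA : A ∈ Matrix.unitaryGroup (Fin N) ℂ)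
    (hHad : ∀ i j, ‖A i j‖ = 1 / Real.sqrt N) :
    mu A = N := by
  classical
  have hNR : (0:ℝ) < N := Nat.cast_pos.mpr hN
  have hsqrt : 0 < Real.sqrt N := Real.sqrt_pos.mpr hNR
  have hne : ∀ i j, A i j ≠ 0 := by
    intro i j h
    have h2 := hHad i j
    rw [h, norm_zero] at h2
    have : (0:ℝ) < 1 / Real.sqrt N := by positivity
    linarith [h2]
  have hmem : N ∈ {m | ∃ f : Fin N → ℂ, f ≠ 0 ∧ m = suppCard f * suppCard (A.mulVec f)} := by
    refine ⟨fun j => if j = (⟨0, hN⟩ : Fin N) then 1 else 0, ?_, ?_⟩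
    · intro h
      have := congrFun h ⟨0, hN⟩
      simp at this
    · have hmul : ∀ i, A.mulVec (fun j => if j = (⟨0, hN⟩ : Fin N) then 1 else 0) i
          = A i ⟨0, hN⟩ := by
        intro i
        simp [Matrix.mulVec, dotProduct]
      have hsupp_f : Function.support (fun j => if j = (⟨0, hN⟩ : Fin N) then (1:ℂ) else 0)
          = {(⟨0, hN⟩ : Fin N)} := by
        ext j
        by_cases h : j = (⟨0, hN⟩ : Fin N) <;> simp [Function.mem_support, h]
      have hsupp_g : Function.support
          (A.mulVec (fun j => if j = (⟨0, hN⟩ : Fin N) then 1 else 0)) = Set.univ := by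
        apply Set.eq_univ_of_forall
        intro i
        rw [Function.mem_support, hmul i]
        exact hne i _
      rw [suppCard, suppCard, hsupp_f, hsupp_g]
      simp [Set.ncard_univ]
  apply le_antisymm
  · exact Nat.sInf_le hmem
  · exact le_csInf ⟨N, hmem⟩ (by rintro m ⟨f, hf0, rfl⟩; exact lower_bound hN A hA hHad f hf0)
end

section
/- Let A be a unitary matrix such that √N·A is an N×N Hadamard matrix, and let p ≥ 1. Then μ(A^{⊗p}) = N^p, where μ is the uncertainty constant min_{f≠0} |supp(f)|·|supp(Af)|. -/
open Matrix Finset in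
lemma suppCard_eq {n : ℕ} (f : Fin n → ℂ) :
    suppCard f = (Finset.univ.filter (fun j => f j ≠ 0)).card := by
  rw [suppCard, ← Set.ncard_coe_finset]
  congr 1
  ext x
  simp [Function.mem_support]

open Matrix Finset in
lemma norm_preserve {n : ℕ} (M : Matrix (Fin n) (Fin n) ℂ)
    (hU : M ∈ Matrix.unitaryGroup (Fin n) ℂ) (f : Fin n → ℂ) :
    ∑ i, Complex.normSq (M.mulVec f i) = ∑ j, Complex.normSq (f j) := by
  have h : star (M.mulVec f) ⬝ᵥ (M.mulVec f) = star f ⬝ᵥ f := by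
    rw [Matrix.star_mulVec, Matrix.dotProduct_mulVec, Matrix.vecMul_vecMul,
      ← Matrix.star_eq_conjTranspose, (Matrix.mem_unitaryGroup_iff').mp hU, Matrix.vecMul_one]
  have := congrArg Complex.re h
  simpa [dotProduct, Complex.mul_conj', Complex.normSq] using this

open Matrix Finset in
lemma mu_of_flat_unitary {n : ℕ} (hn : 0 < n) (M : Matrix (Fin n) (Fin n) ℂ)
    (hU : M ∈ Matrix.unitaryGroup (Fin n) ℂ)
    (hflat : ∀ i j, ‖M i j‖ = 1 / Real.sqrt n) :
    mu M = n := by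
  have hsqrt : (0:ℝ) < Real.sqrt n := Real.sqrt_pos.mpr (by exact_mod_cast hn)
  -- lower bound
  have hlow : ∀ m ∈ {m | ∃ f : Fin n → ℂ, f ≠ 0 ∧ m = suppCard f * suppCard (M.mulVec f)},
      n ≤ m := by
    rintro m ⟨f, hf, rfl⟩
    set g := M.mulVec f with hg
    set S := Finset.univ.filter (fun j => f j ≠ 0) with hS
    set T := Finset.univ.filter (fun i => g i ≠ 0) with hT
    have hE : ∑ i, Complex.normSq (g i) = ∑ j, Complex.normSq (f j) := norm_preserve M hU f
    set E := ∑ j, Complex.normSq (f j) with hEdef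
    have hEpos : 0 < E := by
      obtain ⟨j, hj⟩ := Function.ne_iff.mp hf
      exact Finset.sum_pos' (fun i _ => Complex.normSq_nonneg _)
        ⟨j, Finset.mem_univ j, Complex.normSq_pos.mpr hj⟩
    -- L1 bound on g entries
    set L := ∑ j ∈ S, ‖f j‖ with hL
    have hL1 : ∀ i, ‖g i‖ ≤ L / Real.sqrt n := by
      intro i
      calc ‖g i‖ ≤ ∑ j, ‖M i j * f j‖ := by
            simpa [hg, Matrix.mulVec, dotProduct] using
              (norm_sum_le Finset.univ (fun j => M i j * f j))
        _ = ∑ j, ‖f j‖ / Real.sqrt n := by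
            refine Finset.sum_congr rfl fun j _ => ?_
            rw [norm_mul, hflat]; ring
        _ = (∑ j, ‖f j‖) / Real.sqrt n := by rw [Finset.sum_div]
        _ = L / Real.sqrt n := by
            rw [hL]
            congr 1
            refine (Finset.sum_subset (Finset.subset_univ S) ?_).symm
            intro x _ hx
            simp only [hS, Finset.mem_filter, Finset.mem_univ, true_and, not_not] at hx
            simp [hx]
    -- Cauchy-Schwarz: L^2 ≤ |S| * E
    have hCS : L ^ 2 ≤ (S.card : ℝ) * E := by
      calc L ^ 2 ≤ (S.card : ℝ) * ∑ j ∈ S, ‖f j‖ ^ 2 :=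
            sq_sum_le_card_mul_sum_sq
        _ ≤ (S.card : ℝ) * E := by
            refine mul_le_mul_of_nonneg_left ?_ (by positivity)
            rw [hEdef]
            refine Finset.sum_le_sum_of_subset_of_nonneg (Finset.subset_univ S) ?_ |>.trans ?_
            · intro i _ _; positivity
            · refine le_of_eq (Finset.sum_congr rfl fun j _ => ?_)
              rw [Complex.sq_norm]
    -- sum over T
    have hsum : E ≤ (T.card : ℝ) * ((S.card : ℝ) * E / n) := by
      have h1 : E = ∑ i ∈ T, Complex.normSq (g i) := by
        rw [← hE]
        refine (Finset.sum_subset (Finset.subset_univ T) ?_).symm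
        intro x _ hx
        simp only [hT, Finset.mem_filter, Finset.mem_univ, true_and, not_not] at hx
        simp [hx]
      have h2 : ∀ i ∈ T, Complex.normSq (g i) ≤ (S.card : ℝ) * E / n := by
        intro i _
        have := hL1 i
        have h3 : Complex.normSq (g i) ≤ (L / Real.sqrt n) ^ 2 := by
          rw [← Complex.sq_norm]
          exact pow_le_pow_left₀ (norm_nonneg _) this 2
        refine h3.trans ?_
        rw [div_pow, Real.sq_sqrt (by positivity)]
        gcongr
      calc E = ∑ i ∈ T, Complex.normSq (g i) := h1
        _ ≤ ∑ i ∈ T, ((S.card : ℝ) * E / n) := Finset.sum_le_sum h2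
        _ = (T.card : ℝ) * ((S.card : ℝ) * E / n) := by
            rw [Finset.sum_const, nsmul_eq_mul]
    -- conclude
    have hfinal : (n : ℝ) ≤ (S.card : ℝ) * (T.card : ℝ) := by
      have hnpos : (0:ℝ) < n := by exact_mod_cast hn
      rw [← mul_le_mul_iff_of_pos_right hEpos]
      calc (n:ℝ) * E ≤ n * ((T.card : ℝ) * ((S.card : ℝ) * E / n)) := by
            exact mul_le_mul_of_nonneg_left hsum (le_of_lt hnpos)
        _ = (S.card : ℝ) * (T.card : ℝ) * E := by field_simp
    rw [suppCard_eq, suppCard_eq]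
    exact_mod_cast hfinal
  -- upper bound: delta function
  have hmem : n ∈ {m | ∃ f : Fin n → ℂ, f ≠ 0 ∧ m = suppCard f * suppCard (M.mulVec f)} := by
    haveI : NeZero n := ⟨hn.ne'⟩
    refine ⟨fun j => if j = 0 then 1 else 0, ?_, ?_⟩
    · intro h
      have := congrFun h 0
      simp at this
    · have h1 : suppCard (fun j : Fin n => if j = 0 then (1:ℂ) else 0) = 1 := by
        rw [suppCard_eq]
        rw [show (Finset.univ.filter fun j : Fin n => (if j = 0 then (1:ℂ) else 0) ≠ 0) = {0} by
          ext x; simp [Finset.mem_filter]]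
        simp
      have h2 : suppCard (M.mulVec fun j : Fin n => if j = 0 then (1:ℂ) else 0) = n := by
        rw [suppCard_eq]
        have : ∀ i, M.mulVec (fun j : Fin n => if j = 0 then (1:ℂ) else 0) i = M i 0 := by
          intro i
          simp [Matrix.mulVec, dotProduct]
        rw [show (Finset.univ.filter fun i =>
            M.mulVec (fun j : Fin n => if j = 0 then (1:ℂ) else 0) i ≠ 0) = Finset.univ by
          ext i
          simp only [Finset.mem_filter, Finset.mem_univ, true_and, iff_true, this i]
          intro h
          have := hflat i 0
          rw [h] at this
          simp at this
          exact absurd this.symm (by positivity)]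
        simp
      rw [h1, h2, one_mul]
  exact le_antisymm (Nat.sInf_le hmem) (le_csInf ⟨n, hmem⟩ hlow)
def splitEquiv (N M : ℕ) [NeZero N] : Fin (N * M) ≃ Fin N × Fin M where
  toFun k := (⟨k.val % N, Nat.mod_lt _ (Nat.pos_of_ne_zero (NeZero.ne N))⟩,
    ⟨k.val / N, (Nat.div_lt_iff_lt_mul (Nat.pos_of_ne_zero (NeZero.ne N))).mpr
        (mul_comm N M ▸ k.isLt)⟩)
  invFun x := ⟨x.1.val + N * x.2.val, by
    calc x.1.val + N * x.2.val < N + N * x.2.val := by omega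
      _ = N * (x.2.val + 1) := by ring
      _ ≤ N * M := Nat.mul_le_mul_left N x.2.2⟩
  left_inv k := by
    apply Fin.ext
    simp [Nat.mod_add_div]
  right_inv x := by
    have hN : 0 < N := Nat.pos_of_ne_zero (NeZero.ne N)
    ext
    · simp [Nat.add_mul_mod_self_left, Nat.mod_eq_of_lt x.1.2]
    · simp [Nat.add_mul_div_left _ _ hN, Nat.div_eq_of_lt x.1.2]

open Matrix in
lemma kron_eq_submatrix {N M : ℕ} [NeZero N] (A : Matrix (Fin N) (Fin N) ℂ)
    (B : Matrix (Fin M) (Fin M) ℂ) :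
    kron A B = (Matrix.kroneckerMap (· * ·) A B).submatrix (splitEquiv N M) (splitEquiv N M) :=
  rfl

open Matrix Kronecker in
lemma kron_unitary {N M : ℕ} [NeZero N] (A : Matrix (Fin N) (Fin N) ℂ)
    (B : Matrix (Fin M) (Fin M) ℂ) (hA : A ∈ Matrix.unitaryGroup (Fin N) ℂ)
    (hB : B ∈ Matrix.unitaryGroup (Fin M) ℂ) :
    kron A B ∈ Matrix.unitaryGroup (Fin (N * M)) ℂ := by
  rw [Matrix.mem_unitaryGroup_iff']
  rw [kron_eq_submatrix]
  have hstar : star ((A ⊗ₖ B).submatrix (splitEquiv N M) (splitEquiv N M))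
      = (star (A ⊗ₖ B)).submatrix (splitEquiv N M) (splitEquiv N M) := rfl
  rw [hstar, Matrix.submatrix_mul_equiv]
  have h1 : star (A ⊗ₖ B) = (star A) ⊗ₖ (star B) := by
    ext ⟨i1, i2⟩ ⟨j1, j2⟩
    simp [Matrix.kroneckerMap, Matrix.star_apply, mul_comm]
  rw [h1, show ((star A) ⊗ₖ (star B)) * (A ⊗ₖ B) = (star A * A) ⊗ₖ (star B * B) from
    (Matrix.mul_kronecker_mul _ _ _ _).symm,
    Matrix.mem_unitaryGroup_iff'.mp hA, Matrix.mem_unitaryGroup_iff'.mp hB,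
    Matrix.one_kronecker_one, Matrix.submatrix_one_equiv]

open Matrix in
lemma reindex_unitary {n m : ℕ} (e : Fin n ≃ Fin m) (A : Matrix (Fin n) (Fin n) ℂ)
    (hA : A ∈ Matrix.unitaryGroup (Fin n) ℂ) :
    Matrix.reindex e e A ∈ Matrix.unitaryGroup (Fin m) ℂ := by
  rw [Matrix.mem_unitaryGroup_iff'] at hA ⊢
  rw [Matrix.reindex_apply,
    show star (A.submatrix ⇑e.symm ⇑e.symm) = (star A).submatrix ⇑e.symm ⇑e.symm from rfl,
    Matrix.submatrix_mul_equiv, hA, Matrix.submatrix_one_equiv]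

open Matrix in
lemma kronPow_unitary {N : ℕ} [NeZero N] (A : Matrix (Fin N) (Fin N) ℂ)
    (hA : A ∈ Matrix.unitaryGroup (Fin N) ℂ) (p : ℕ) :
    kronPow A p ∈ Matrix.unitaryGroup (Fin (N ^ p)) ℂ := by
  induction p with
  | zero => simp [kronPow]; exact Submonoid.one_mem _
  | succ p ih => exact reindex_unitary _ _ (kron_unitary A _ hA ih)

lemma kronPow_flat {N : ℕ} [NeZero N] (A : Matrix (Fin N) (Fin N) ℂ)
    (hHad : ∀ i j, ‖A i j‖ = 1 / Real.sqrt N) (p : ℕ) :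
    ∀ i j, ‖kronPow A p i j‖ = 1 / Real.sqrt (N ^ p) := by
  induction p with
  | zero =>
    intro i j
    have hi : i.val = 0 := Nat.lt_one_iff.mp (by simpa using i.isLt)
    have hj : j.val = 0 := Nat.lt_one_iff.mp (by simpa using j.isLt)
    have hij : i = j := Fin.ext (by rw [hi, hj])
    subst hij
    simp [kronPow]
  | succ p ih =>
    intro i j
    have : kronPow A (p+1) i j = kron A (kronPow A p) (finCongr (by rw [pow_succ]; ring) |>.symm i)
        ((finCongr (by rw [pow_succ]; ring)).symm j) := rfl
    rw [this]
    unfold kron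
    rw [norm_mul, hHad, ih]
    rw [pow_succ, Real.sqrt_mul (by positivity)]
    ring

/-- For a scaled Hadamard matrix `A`, `μ(A^{⊗p}) = N^p`. -/
theorem stmt_14 {N : ℕ} [NeZero N] (A : Matrix (Fin N) (Fin N) ℂ)
    (hA : A ∈ Matrix.unitaryGroup (Fin N) ℂ)
    (hHad : ∀ i j, ‖A i j‖ = 1 / Real.sqrt N)
    (p : ℕ) (hp : 1 ≤ p) :
    mu (kronPow A p) = N ^ p := by
  have hNpos : 0 < N := Nat.pos_of_ne_zero (NeZero.ne N)
  refine mu_of_flat_unitary (pow_pos hNpos p) _ (kronPow_unitary A hA p) ?_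
  intro i j
  rw [kronPow_flat A hHad p i j, Nat.cast_pow]
end

section
/- Let A be an n×n unitary matrix with real entries, M := max_{i,j}|A_{ij}|, and μ(A) := min_{f≠0}|supp(f)|·|supp(Af)|. Then 1/M² ≤ μ(A) ≤ n. -/
open Matrix Finset in
lemma norm_pres {n : ℕ} (A : Matrix (Fin n) (Fin n) ℂ)
    (hA : A ∈ Matrix.unitaryGroup (Fin n) ℂ) (f : Fin n → ℂ) :
    ∑ j, ‖A.mulVec f j‖ ^ 2 = ∑ j, ‖f j‖ ^ 2 := by
  have h1 : Aᴴ * A = 1 := hA.1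
  have key : star (A.mulVec f) ⬝ᵥ (A.mulVec f) = star f ⬝ᵥ f := by
    rw [Matrix.star_mulVec, Matrix.dotProduct_mulVec, Matrix.vecMul_vecMul, h1,
      Matrix.vecMul_one]
  have : (↑(∑ j, ‖A.mulVec f j‖ ^ 2) : ℂ) = ↑(∑ j, ‖f j‖ ^ 2) := by
    push_cast
    simpa [dotProduct, Pi.star_apply,
      Complex.star_def, Complex.normSq_eq_norm_sq, ← Complex.normSq_eq_conj_mul_self] using key
  exact_mod_cast this

open Matrix Finset in
lemma key_ineq {n : ℕ} (hn : 0 < n) (A : Matrix (Fin n) (Fin n) ℂ)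
    (hA : A ∈ Matrix.unitaryGroup (Fin n) ℂ) (M : ℝ)
    (hM : ∀ i j, ‖A i j‖ ≤ M)
    (f : Fin n → ℂ) (hf : f ≠ 0) :
    1 ≤ M ^ 2 * (suppCard f * suppCard (A.mulVec f)) := by
  classical
  set g := A.mulVec f with hg
  have hgne : g ≠ 0 := by
    intro h
    apply hf
    have h1 : Aᴴ * A = 1 := hA.1
    have : (Aᴴ * A).mulVec f = Aᴴ.mulVec g := by
      rw [← Matrix.mulVec_mulVec]
    rw [h1, Matrix.one_mulVec, h, Matrix.mulVec_zero] at this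
    exact this
  -- the finset supports
  set Sf := Finset.univ.filter (fun j => f j ≠ 0) with hSf
  set Sg := Finset.univ.filter (fun j => g j ≠ 0) with hSg
  have hcardf : suppCard f = Sf.card := by
    rw [suppCard, Set.ncard_eq_toFinset_card']
    congr 1
    ext j; rw [Set.mem_toFinset]; simp [Sf, Function.support]
  have hcardg : suppCard g = Sg.card := by
    rw [suppCard, Set.ncard_eq_toFinset_card']
    congr 1
    ext j; rw [Set.mem_toFinset]; simp [Sg, Function.support]
  -- pick i maximizing |g i|
  obtain ⟨i, -, hi⟩ := Finset.exists_max_image (Finset.univ : Finset (Fin n))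
    (fun j => ‖g j‖) ⟨⟨0, hn⟩, Finset.mem_univ _⟩
  set T := ‖g i‖ with hT
  have hTpos : 0 < T := by
    obtain ⟨k, hk⟩ := Function.ne_iff.mp hgne
    have := hi k (Finset.mem_univ k)
    have hk' : 0 < ‖g k‖ := by
      simpa [norm_pos_iff] using hk
    linarith
  -- (i): T ≤ M * ∑_{Sf} |f j|
  have hMnn : 0 ≤ M := le_trans (norm_nonneg _) (hM i i)
  have step1 : T ≤ M * ∑ j ∈ Sf, ‖f j‖ := by
    have : T ≤ ∑ j, ‖A i j‖ * ‖f j‖ := by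
      calc T = ‖∑ j, A i j * f j‖ := by
              simp [hT, hg, Matrix.mulVec, dotProduct]
        _ ≤ ∑ j, ‖A i j * f j‖ := norm_sum_le _ _
        _ = ∑ j, ‖A i j‖ * ‖f j‖ := by simp [_root_.map_mul]
    refine this.trans ?_
    have he : ∑ j, ‖A i j‖ * ‖f j‖
        = ∑ j ∈ Sf, ‖A i j‖ * ‖f j‖ := by
      symm
      apply Finset.sum_subset (Finset.subset_univ _)
      intro x _ hx
      simp [Sf] at hx
      simp [hx]
    rw [he, Finset.mul_sum]
    exact Finset.sum_le_sum fun j _ => mul_le_mul_of_nonneg_right (hM i j) (norm_nonneg _)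
  -- (ii): Cauchy-Schwarz
  have step2 : (∑ j ∈ Sf, ‖f j‖) ^ 2 ≤ Sf.card * ∑ j ∈ Sf, ‖f j‖ ^ 2 :=
    sq_sum_le_card_mul_sum_sq
  -- sum over Sf = sum over univ
  have hsf : ∑ j ∈ Sf, ‖f j‖ ^ 2 = ∑ j, ‖f j‖ ^ 2 := by
    apply Finset.sum_subset (Finset.subset_univ _)
    intro x _ hx
    simp [Sf] at hx
    simp [hx]
  -- (iii)
  have step3 : ∑ j, ‖f j‖ ^ 2 = ∑ j, ‖g j‖ ^ 2 :=
    (norm_pres A hA f).symm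
  -- (iv)
  have step4 : ∑ j, ‖g j‖ ^ 2 ≤ Sg.card * T ^ 2 := by
    have he : ∑ j, ‖g j‖ ^ 2 = ∑ j ∈ Sg, ‖g j‖ ^ 2 := by
      symm
      apply Finset.sum_subset (Finset.subset_univ _)
      intro x _ hx
      simp [Sg] at hx
      simp [hx]
    rw [he]
    calc ∑ j ∈ Sg, ‖g j‖ ^ 2 ≤ ∑ _j ∈ Sg, T ^ 2 := by
          refine Finset.sum_le_sum fun j _ => ?_
          exact pow_le_pow_left₀ (norm_nonneg _) (hi j (Finset.mem_univ j)) 2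
      _ = Sg.card * T ^ 2 := by rw [Finset.sum_const, nsmul_eq_mul]
  -- combine
  have chain : T ^ 2 ≤ M ^ 2 * (Sf.card * Sg.card) * T ^ 2 := by
    calc T ^ 2 ≤ (M * ∑ j ∈ Sf, ‖f j‖) ^ 2 := by
          apply pow_le_pow_left₀ (norm_nonneg _) step1
      _ = M ^ 2 * (∑ j ∈ Sf, ‖f j‖) ^ 2 := by ring
      _ ≤ M ^ 2 * (Sf.card * ∑ j ∈ Sf, ‖f j‖ ^ 2) :=
          mul_le_mul_of_nonneg_left step2 (by positivity)
      _ = M ^ 2 * Sf.card * (∑ j, ‖g j‖ ^ 2) := by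
          rw [hsf, step3]; ring
      _ ≤ M ^ 2 * Sf.card * (Sg.card * T ^ 2) :=
          mul_le_mul_of_nonneg_left step4 (by positivity)
      _ = M ^ 2 * (Sf.card * Sg.card) * T ^ 2 := by ring
  have h1 : (1 : ℝ) ≤ M ^ 2 * (Sf.card * Sg.card) := by
    have hT2 : (0:ℝ) < T ^ 2 := by positivity
    nlinarith [chain]
  rw [hcardf, hcardg]
  push_cast
  exact h1

/-- For a real unitary (orthogonal) matrix, `1/M² ≤ μ(A) ≤ n`. -/
theorem stmt_18 {n : ℕ} (hn : 0 < n) (A : Matrix (Fin n) (Fin n) ℂ)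
    (hA : A ∈ Matrix.unitaryGroup (Fin n) ℂ)
    (hreal : ∀ i j, (A i j).im = 0) (M : ℝ)
    (hM : IsGreatest (Set.range fun q : Fin n × Fin n => ‖A q.1 q.2‖) M) :
    1 / M ^ 2 ≤ (mu A : ℝ) ∧ mu A ≤ n := by
  classical
  constructor
  · -- lower bound
    have hne : {m | ∃ f : Fin n → ℂ, f ≠ 0 ∧ m = suppCard f * suppCard (A.mulVec f)}.Nonempty := by
      set x : Fin n := ⟨0, hn⟩
      set e : Fin n → ℂ := fun j => if j = x then 1 else 0 with he
      have hene : e ≠ 0 := by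
        intro h
        have := congrFun h x
        simp [he] at this
      exact ⟨_, e, hene, rfl⟩
    have hmm := Nat.sInf_mem hne
    obtain ⟨f, hf, heq⟩ := hmm
    have hkey := key_ineq hn A hA M (fun i j => hM.2 ⟨(i, j), rfl⟩) f hf
    have hkey' : (1:ℝ) ≤ M ^ 2 * (↑(mu A) : ℝ) := by
      rw [mu, heq]; push_cast; exact hkey
    have hM2 : (0:ℝ) < M ^ 2 := by
      rcases lt_or_eq_of_le (sq_nonneg M) with h | h
      · exact h
      · exfalso; rw [← h] at hkey'; simp at hkey'; linarith
    rw [div_le_iff₀ hM2]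
    calc (1:ℝ) ≤ M ^ 2 * (↑(mu A) : ℝ) := hkey'
      _ = (↑(mu A) : ℝ) * M ^ 2 := by ring
  · -- upper bound
    set x : Fin n := ⟨0, hn⟩
    set e : Fin n → ℂ := fun j => if j = x then 1 else 0 with he
    have hene : e ≠ 0 := by
      intro h
      have := congrFun h x
      simp [he] at this
    have hsuppe : suppCard e = 1 := by
      rw [suppCard]
      have : Function.support e = {x} := by
        ext j; simp [he, Function.support]
      rw [this, Set.ncard_singleton]
    have hub : suppCard e * suppCard (A.mulVec e) ≤ n := by
      rw [hsuppe, one_mul, suppCard]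
      calc (Function.support (A.mulVec e)).ncard ≤ (Set.univ : Set (Fin n)).ncard :=
            Set.ncard_le_ncard (Set.subset_univ _) Set.finite_univ
        _ = n := by rw [Set.ncard_univ]; simp
    exact le_trans (Nat.sInf_le ⟨e, hene, rfl⟩) hub
end
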